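/- arXiv:1405.3595 — 11 statements merged into one kernel-verified Lean document; each statement's English description precedes it below -/
import Mathlib

section
/- Let ABCD be a quadrilateral in the plane, E = AC ∩ BD, and let M ∈ AC and N ∈ BD be points such that BM ∥ AD and AN ∥ BC. Then MN ∥ CD. -/
/-- From collinearity of `{A, C, M}` with `A ≠ C`, get a parametrization of `M`. -/
lemma coll_param {A C M : ℝ × ℝ} (h : Collinear ℝ ({A, C, M} : Set (ℝ × ℝ)))
    (hAC : A ≠ C) : ∃ s : ℝ, M - A = s • (C - A) := by
  obtain ⟨v, hv⟩ := (collinear_iff_of_mem (show A ∈ ({A, C, M} : Set (ℝ × ℝ)) by simp)).1 h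
  obtain ⟨tc, hc⟩ := hv C (by simp)
  obtain ⟨tm, hm⟩ := hv M (by simp)
  have hCA : C - A = tc • v := by simp [hc, vadd_eq_add]
  have hMA : M - A = tm • v := by simp [hm, vadd_eq_add]
  have htc : tc ≠ 0 := by
    rintro rfl
    apply hAC
    have : C - A = 0 := by rw [hCA, zero_smul]
    have := sub_eq_zero.1 this
    exact this.symm
  refine ⟨tm / tc, ?_⟩
  rw [hMA, hCA, smul_smul, div_mul_cancel₀ _ htc]

/-- Linear independence of `C - A` and `D - A` when `A, C, D` are not collinear. -/
lemma indep_of_not_collinear {A C D : ℝ × ℝ}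
    (h : ¬ Collinear ℝ ({A, C, D} : Set (ℝ × ℝ))) {α β : ℝ}
    (hv : α • (C - A) = β • (D - A)) : α = 0 ∧ β = 0 := by
  by_cases hα : α = 0
  · subst hα
    refine ⟨rfl, ?_⟩
    by_contra hβ
    have hDA : D - A = 0 := by
      have : β • (D - A) = 0 := by rw [← hv, zero_smul]
      exact (smul_eq_zero.1 this).resolve_left hβ
    have hDeq : D = A := sub_eq_zero.1 hDA
    apply h
    rw [hDeq]
    have : ({A, C, A} : Set (ℝ × ℝ)) = {A, C} := by
      ext x; simp only [Set.mem_insert_iff, Set.mem_singleton_iff]; tauto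
    rw [this]
    exact collinear_pair ℝ A C
  · exfalso
    apply h
    refine (collinear_iff_of_mem (show A ∈ ({A, C, D} : Set (ℝ × ℝ)) by simp)).2
      ⟨D - A, ?_⟩
    intro p hp
    simp only [Set.mem_insert_iff, Set.mem_singleton_iff] at hp
    have hCA : C - A = (β / α) • (D - A) := by
      rw [div_eq_inv_mul, mul_smul, ← hv, smul_smul, inv_mul_cancel₀ hα, one_smul]
    rcases hp with h | h | h
    · exact ⟨0, by simp [h, vadd_eq_add]⟩
    · refine ⟨β / α, ?_⟩
      rw [h, vadd_eq_add, ← hCA]; abel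
    · exact ⟨1, by simp [h, vadd_eq_add]⟩

/-- **Sharygin's problem.** Let `ABCD` be a quadrilateral in the plane (no three of the
points collinear), `E = AC ∩ BD`, and let `M ∈ AC`, `N ∈ BD` be points with
`BM ∥ AD` and `AN ∥ BC`.  Then `MN ∥ CD`. -/
theorem sharygin_problem (A B C D E M N : ℝ × ℝ)
    (hABC : ¬ Collinear ℝ ({A, B, C} : Set (ℝ × ℝ)))
    (hABD : ¬ Collinear ℝ ({A, B, D} : Set (ℝ × ℝ)))
    (hACD : ¬ Collinear ℝ ({A, C, D} : Set (ℝ × ℝ)))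
    (hBCD : ¬ Collinear ℝ ({B, C, D} : Set (ℝ × ℝ)))
    (hE1 : Collinear ℝ ({A, C, E} : Set (ℝ × ℝ)))
    (hE2 : Collinear ℝ ({B, D, E} : Set (ℝ × ℝ)))
    (hM : Collinear ℝ ({A, C, M} : Set (ℝ × ℝ)))
    (hN : Collinear ℝ ({B, D, N} : Set (ℝ × ℝ)))
    (hBM : B ≠ M) (hAN : A ≠ N)
    (hpar1 : ∃ t : ℝ, M - B = t • (D - A))
    (hpar2 : ∃ t : ℝ, N - A = t • (C - B)) :
    ∃ t : ℝ, N - M = t • (D - C) := by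
  have hAC : A ≠ C := by
    rintro rfl
    apply hACD
    have : ({A, A, D} : Set (ℝ × ℝ)) = {A, D} := by ext x; simp
    rw [this]; exact collinear_pair ℝ A D
  have hBD : B ≠ D := by
    rintro rfl
    apply hBCD
    have : ({B, C, B} : Set (ℝ × ℝ)) = {B, C} := by
      ext x; simp; tauto
    rw [this]; exact collinear_pair ℝ B C
  obtain ⟨s, hs⟩ := coll_param hM hAC
  obtain ⟨u, hu⟩ := coll_param hN hBD
  obtain ⟨t, ht⟩ := hpar1
  obtain ⟨v, hv⟩ := hpar2
  -- Work componentwise.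
  have hs1 : M.1 - A.1 = s * (C.1 - A.1) := congrArg Prod.fst hs
  have hs2 : M.2 - A.2 = s * (C.2 - A.2) := congrArg Prod.snd hs
  have hu1 : N.1 - B.1 = u * (D.1 - B.1) := congrArg Prod.fst hu
  have hu2 : N.2 - B.2 = u * (D.2 - B.2) := congrArg Prod.snd hu
  have ht1 : M.1 - B.1 = t * (D.1 - A.1) := congrArg Prod.fst ht
  have ht2 : M.2 - B.2 = t * (D.2 - A.2) := congrArg Prod.snd ht
  have hv1 : N.1 - A.1 = v * (C.1 - B.1) := congrArg Prod.fst hv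
  have hv2 : N.2 - A.2 = v * (C.2 - B.2) := congrArg Prod.snd hv
  -- key vector identity
  have key : ((1 + v - u) * s - v) • (C - A) = ((1 + v - u) * t - u) • (D - A) := by
    apply Prod.ext
    · show ((1 + v - u) * s - v) * (C.1 - A.1) = ((1 + v - u) * t - u) * (D.1 - A.1)
      linear_combination (1 + v - u) * ht1 - (1 + v - u) * hs1 + hv1 - hu1
    · show ((1 + v - u) * s - v) * (C.2 - A.2) = ((1 + v - u) * t - u) * (D.2 - A.2)
      linear_combination (1 + v - u) * ht2 - (1 + v - u) * hs2 + hv2 - hu2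
  obtain ⟨h1, h2⟩ := indep_of_not_collinear hACD key
  -- the scalar relation
  have hG : v * t + v - v * s - s = 0 := by
    have hw : (1 + v - u) * (1 + t - s) = 1 := by linear_combination h2 - h1
    linear_combination s * hw - (1 + t - s) * h1
  refine ⟨v * t, ?_⟩
  apply Prod.ext
  · show N.1 - M.1 = (v * t) * (D.1 - C.1)
    linear_combination hv1 - hs1 + v * ht1 - v * hs1 + (C.1 - A.1) * hG
  · show N.2 - M.2 = (v * t) * (D.2 - C.2)
    linear_combination hv2 - hs2 + v * ht2 - v * hs2 + (C.2 - A.2) * hG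
end

section
/- (Pappus) Let g and g' be two distinct lines in the projective plane, with A, B, C on g and A', B', C' on g', all six points distinct from the intersection g ∩ g'. Then the points P = BC' ∩ CB', Q = AC' ∩ CA', and R = AB' ∩ BA' are collinear. -/
open Matrix

noncomputable section

/-- A point (or line) of the real projective plane, represented by a vector of
homogeneous coordinates in `ℝ³`. -/
abbrev PPt : Type := Fin 3 → ℝ

/-- The cross product: used both for the join of two points (giving the line through
them as a covector) and for the meet of two lines (giving their intersection point). -/
def pcross (a b : PPt) : PPt := crossProduct a b

/-- Three points (or three lines) are collinear (resp. concurrent) iff the determinant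
of their homogeneous coordinates vanishes. -/
def collin (a b c : PPt) : Prop := Matrix.det (Matrix.of ![a, b, c]) = 0


lemma det_zero_of_orth (g : PPt) (hg : g ≠ 0) (u v w : PPt)
    (hu : u ⬝ᵥ g = 0) (hv : v ⬝ᵥ g = 0) (hw : w ⬝ᵥ g = 0) :
    Matrix.det (Matrix.of ![u, v, w]) = 0 := by
  rw [← Matrix.exists_mulVec_eq_zero_iff]
  refine ⟨g, hg, ?_⟩
  ext i
  fin_cases i <;> simp [Matrix.mulVec, hu, hv, hw]

/-- **Pappus' theorem.** If `a, b, c` lie on a line `g` and `a', b', c'` on a line `g'`,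
with `g, g'` distinct and all six points distinct from `g ∩ g'` (and the points on each
line pairwise distinct), then `P = bc' ∩ cb'`, `Q = ac' ∩ ca'`, `R = ab' ∩ ba'` are
collinear. -/
theorem pappus (g g' a b c a' b' c' P Q R : PPt)
    (hgg' : pcross g g' ≠ 0)
    (ha : a ⬝ᵥ g = 0) (hb : b ⬝ᵥ g = 0) (hc : c ⬝ᵥ g = 0)
    (ha' : a' ⬝ᵥ g' = 0) (hb' : b' ⬝ᵥ g' = 0) (hc' : c' ⬝ᵥ g' = 0)
    (hane : a ⬝ᵥ g' ≠ 0) (hbne : b ⬝ᵥ g' ≠ 0) (hcne : c ⬝ᵥ g' ≠ 0)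
    (ha'ne : a' ⬝ᵥ g ≠ 0) (hb'ne : b' ⬝ᵥ g ≠ 0) (hc'ne : c' ⬝ᵥ g ≠ 0)
    (hab : pcross a b ≠ 0) (hac : pcross a c ≠ 0) (hbc : pcross b c ≠ 0)
    (ha'b' : pcross a' b' ≠ 0) (ha'c' : pcross a' c' ≠ 0) (hb'c' : pcross b' c' ≠ 0)
    (hP : P = pcross (pcross b c') (pcross c b'))
    (hQ : Q = pcross (pcross a c') (pcross c a'))
    (hR : R = pcross (pcross a b') (pcross b a'))
    (hP0 : P ≠ 0) (hQ0 : Q ≠ 0) (hR0 : R ≠ 0) :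
    collin P Q R := by
  have hg : g ≠ 0 := by rintro rfl; simp [pcross] at hgg'
  have hg' : g' ≠ 0 := by rintro rfl; simp [pcross] at hgg'
  have h1 : Matrix.det (Matrix.of ![a, b, c]) = 0 := det_zero_of_orth g hg a b c ha hb hc
  have h2 : Matrix.det (Matrix.of ![a', b', c']) = 0 := det_zero_of_orth g' hg' a' b' c' ha' hb' hc'
  subst hP hQ hR
  unfold collin
  simp only [Matrix.det_fin_three, Matrix.of_apply, Matrix.cons_val', Matrix.cons_val_zero,
    Matrix.cons_val_one, Matrix.head_cons, Matrix.empty_val', Matrix.cons_val_fin_one,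
    Matrix.head_fin_const, Matrix.cons_val_two, Matrix.tail_cons, pcross, crossProduct,
    LinearMap.mk₂_apply] at h1 h2 ⊢
  linear_combination (a 2*b 2*c 2*a' 1*a' 1*b' 0*b' 1*c' 0*c' 0 - a 2*b 2*c 2*a' 1*a' 1*b' 0*b' 0*c' 0*c' 1 - a 2*b 2*c 2*a' 0*a' 1*b' 1*b' 1*c' 0*c' 0 + a 2*b 2*c 2*a' 0*a' 1*b' 0*b' 0*c' 1*c' 1 + a 2*b 2*c 2*a' 0*a' 0*b' 1*b' 1*c' 0*c' 1 - a 2*b 2*c 2*a' 0*a' 0*b' 0*b' 1*c' 1*c' 1 - a 2*b 2*c 1*a' 1*a' 2*b' 0*b' 1*c' 0*c' 0 + a 2*b 2*c 1*a' 1*a' 2*b' 0*b' 0*c' 0*c' 1 + a 2*b 2*c 1*a' 0*a' 1*b' 1*b' 2*c' 0*c' 0 - a 2*b 2*c 1*a' 0*a' 1*b' 0*b' 0*c' 1*c' 2 - a 2*b 2*c 1*a' 0*a' 0*b' 1*b' 2*c' 0*c' 1 + a 2*b 2*c 1*a' 0*a' 0*b' 0*b' 1*c' 1*c' 2 + a 2*b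 2*c 0*a' 1*a' 1*b' 0*b' 2*c' 0*c' 1 - a 2*b 2*c 0*a' 1*a' 1*b' 0*b' 1*c' 0*c' 2 - a 2*b 2*c 0*a' 0*a' 2*b' 1*b' 1*c' 0*c' 1 + a 2*b 2*c 0*a' 0*a' 2*b' 0*b' 1*c' 1*c' 1 + a 2*b 2*c 0*a' 0*a' 1*b' 1*b' 1*c' 0*c' 2 - a 2*b 2*c 0*a' 0*a' 1*b' 0*b' 2*c' 1*c' 1 - a 2*b 1*c 2*a' 1*a' 2*b' 0*b' 1*c' 0*c' 0 + a 2*b 1*c 2*a' 1*a' 2*b' 0*b' 0*c' 0*c' 1 + a 2*b 1*c 2*a' 0*a' 1*b' 1*b' 2*c' 0*c' 0 - a 2*b 1*c 2*a' 0*a' 1*b' 0*b' 0*c' 1*c' 2 - a 2*b 1*c 2*a' 0*a' 0*b' 1*b' 2*c' 0*c' 1 + a 2*b 1*c 2*a' 0*a' 0*b' 0*b' 1*c' 1*c' 2 + a 2*b 1*c 1*a' 2*a' 2*b' 0*b' 1*c' 0*c' 0 - a 2*b 1*c 1*a' 2*a' 2*b' 0*b' 0*c' 0*c' 1 - a 2*b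 1*c 1*a' 0*a' 1*b' 2*b' 2*c' 0*c' 0 + a 2*b 1*c 1*a' 0*a' 1*b' 0*b' 0*c' 2*c' 2 + a 2*b 1*c 1*a' 0*a' 0*b' 2*b' 2*c' 0*c' 1 - a 2*b 1*c 1*a' 0*a' 0*b' 0*b' 1*c' 2*c' 2 - a 2*b 1*c 0*a' 1*a' 2*b' 0*b' 2*c' 0*c' 1 + a 2*b 1*c 0*a' 1*a' 2*b' 0*b' 1*c' 0*c' 2 + a 2*b 1*c 0*a' 0*a' 2*b' 1*b' 2*c' 0*c' 1 - a 2*b 1*c 0*a' 0*a' 2*b' 0*b' 1*c' 1*c' 2 - a 2*b 1*c 0*a' 0*a' 1*b' 1*b' 2*c' 0*c' 2 + a 2*b 1*c 0*a' 0*a' 1*b' 0*b' 2*c' 1*c' 2 + a 2*b 0*c 2*a' 1*a' 2*b' 1*b' 1*c' 0*c' 0 - a 2*b 0*c 2*a' 1*a' 2*b' 0*b' 0*c' 1*c' 1 - a 2*b 0*c 2*a' 1*a' 1*b' 1*b' 2*c' 0*c' 0 + a 2*b 0*c 2*a' 1*a' 1*b' 0*b' 0*c' 1*c' 2 + a 2*b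 0*c 2*a' 0*a' 0*b' 1*b' 2*c' 1*c' 1 - a 2*b 0*c 2*a' 0*a' 0*b' 1*b' 1*c' 1*c' 2 - a 2*b 0*c 1*a' 2*a' 2*b' 1*b' 1*c' 0*c' 0 + a 2*b 0*c 1*a' 2*a' 2*b' 0*b' 0*c' 1*c' 1 + a 2*b 0*c 1*a' 1*a' 2*b' 0*b' 2*c' 0*c' 1 - a 2*b 0*c 1*a' 1*a' 2*b' 0*b' 1*c' 0*c' 2 + a 2*b 0*c 1*a' 1*a' 1*b' 2*b' 2*c' 0*c' 0 - a 2*b 0*c 1*a' 1*a' 1*b' 0*b' 0*c' 2*c' 2 - a 2*b 0*c 1*a' 0*a' 2*b' 1*b' 2*c' 0*c' 1 + a 2*b 0*c 1*a' 0*a' 2*b' 0*b' 1*c' 1*c' 2 + a 2*b 0*c 1*a' 0*a' 1*b' 1*b' 2*c' 0*c' 2 - a 2*b 0*c 1*a' 0*a' 1*b' 0*b' 2*c' 1*c' 2 - a 2*b 0*c 1*a' 0*a' 0*b' 2*b' 2*c' 1*c' 1 + a 2*b 0*c 1*a' 0*a' 0*b' 1*b' 1*c' 2*c' 2 - a 2*b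 0*c 0*a' 1*a' 2*b' 1*b' 1*c' 0*c' 2 + a 2*b 0*c 0*a' 1*a' 2*b' 0*b' 2*c' 1*c' 1 + a 2*b 0*c 0*a' 1*a' 1*b' 1*b' 2*c' 0*c' 2 - a 2*b 0*c 0*a' 1*a' 1*b' 0*b' 2*c' 1*c' 2 - a 2*b 0*c 0*a' 0*a' 2*b' 1*b' 2*c' 1*c' 1 + a 2*b 0*c 0*a' 0*a' 2*b' 1*b' 1*c' 1*c' 2 - a 1*b 2*c 2*a' 1*a' 1*b' 0*b' 2*c' 0*c' 0 + a 1*b 2*c 2*a' 1*a' 1*b' 0*b' 0*c' 0*c' 2 + a 1*b 2*c 2*a' 0*a' 2*b' 1*b' 1*c' 0*c' 0 - a 1*b 2*c 2*a' 0*a' 2*b' 0*b' 0*c' 1*c' 1 - a 1*b 2*c 2*a' 0*a' 0*b' 1*b' 1*c' 0*c' 2 + a 1*b 2*c 2*a' 0*a' 0*b' 0*b' 2*c' 1*c' 1 + a 1*b 2*c 1*a' 1*a' 2*b' 0*b' 2*c' 0*c' 0 - a 1*b 2*c 1*a' 1*a' 2*b' 0*b' 0*c' 0*c' 2 - a 1*b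 2*c 1*a' 0*a' 2*b' 1*b' 2*c' 0*c' 0 + a 1*b 2*c 1*a' 0*a' 2*b' 0*b' 0*c' 1*c' 2 + a 1*b 2*c 1*a' 0*a' 0*b' 1*b' 2*c' 0*c' 2 - a 1*b 2*c 1*a' 0*a' 0*b' 0*b' 2*c' 1*c' 2 - a 1*b 2*c 0*a' 2*a' 2*b' 1*b' 1*c' 0*c' 0 + a 1*b 2*c 0*a' 2*a' 2*b' 0*b' 0*c' 1*c' 1 + a 1*b 2*c 0*a' 1*a' 2*b' 0*b' 2*c' 0*c' 1 - a 1*b 2*c 0*a' 1*a' 2*b' 0*b' 1*c' 0*c' 2 + a 1*b 2*c 0*a' 1*a' 1*b' 2*b' 2*c' 0*c' 0 - a 1*b 2*c 0*a' 1*a' 1*b' 0*b' 0*c' 2*c' 2 - a 1*b 2*c 0*a' 0*a' 2*b' 1*b' 2*c' 0*c' 1 + a 1*b 2*c 0*a' 0*a' 2*b' 0*b' 1*c' 1*c' 2 + a 1*b 2*c 0*a' 0*a' 1*b' 1*b' 2*c' 0*c' 2 - a 1*b 2*c 0*a' 0*a' 1*b' 0*b' 2*c' 1*c' 2 - a 1*b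 2*c 0*a' 0*a' 0*b' 2*b' 2*c' 1*c' 1 + a 1*b 2*c 0*a' 0*a' 0*b' 1*b' 1*c' 2*c' 2 + a 1*b 1*c 2*a' 1*a' 2*b' 0*b' 2*c' 0*c' 0 - a 1*b 1*c 2*a' 1*a' 2*b' 0*b' 0*c' 0*c' 2 - a 1*b 1*c 2*a' 0*a' 2*b' 1*b' 2*c' 0*c' 0 + a 1*b 1*c 2*a' 0*a' 2*b' 0*b' 0*c' 1*c' 2 + a 1*b 1*c 2*a' 0*a' 0*b' 1*b' 2*c' 0*c' 2 - a 1*b 1*c 2*a' 0*a' 0*b' 0*b' 2*c' 1*c' 2 - a 1*b 1*c 1*a' 2*a' 2*b' 0*b' 2*c' 0*c' 0 + a 1*b 1*c 1*a' 2*a' 2*b' 0*b' 0*c' 0*c' 2 + a 1*b 1*c 1*a' 0*a' 2*b' 2*b' 2*c' 0*c' 0 - a 1*b 1*c 1*a' 0*a' 2*b' 0*b' 0*c' 2*c' 2 - a 1*b 1*c 1*a' 0*a' 0*b' 2*b' 2*c' 0*c' 2 + a 1*b 1*c 1*a' 0*a' 0*b' 0*b' 2*c' 2*c' 2 + a 1*b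 1*c 0*a' 2*a' 2*b' 1*b' 2*c' 0*c' 0 - a 1*b 1*c 0*a' 2*a' 2*b' 0*b' 0*c' 1*c' 2 - a 1*b 1*c 0*a' 1*a' 2*b' 2*b' 2*c' 0*c' 0 + a 1*b 1*c 0*a' 1*a' 2*b' 0*b' 0*c' 2*c' 2 + a 1*b 1*c 0*a' 0*a' 0*b' 2*b' 2*c' 1*c' 2 - a 1*b 1*c 0*a' 0*a' 0*b' 1*b' 2*c' 2*c' 2 - a 1*b 0*c 2*a' 1*a' 2*b' 0*b' 2*c' 0*c' 1 + a 1*b 0*c 2*a' 1*a' 2*b' 0*b' 1*c' 0*c' 2 + a 1*b 0*c 2*a' 0*a' 2*b' 1*b' 2*c' 0*c' 1 - a 1*b 0*c 2*a' 0*a' 2*b' 0*b' 1*c' 1*c' 2 - a 1*b 0*c 2*a' 0*a' 1*b' 1*b' 2*c' 0*c' 2 + a 1*b 0*c 2*a' 0*a' 1*b' 0*b' 2*c' 1*c' 2 + a 1*b 0*c 1*a' 2*a' 2*b' 0*b' 2*c' 0*c' 1 - a 1*b 0*c 1*a' 2*a' 2*b' 0*b' 1*c' 0*c' 2 - a 1*b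 0*c 1*a' 0*a' 2*b' 2*b' 2*c' 0*c' 1 + a 1*b 0*c 1*a' 0*a' 2*b' 0*b' 1*c' 2*c' 2 + a 1*b 0*c 1*a' 0*a' 1*b' 2*b' 2*c' 0*c' 2 - a 1*b 0*c 1*a' 0*a' 1*b' 0*b' 2*c' 2*c' 2 - a 1*b 0*c 0*a' 2*a' 2*b' 1*b' 2*c' 0*c' 1 + a 1*b 0*c 0*a' 2*a' 2*b' 0*b' 1*c' 1*c' 2 + a 1*b 0*c 0*a' 1*a' 2*b' 2*b' 2*c' 0*c' 1 - a 1*b 0*c 0*a' 1*a' 2*b' 0*b' 1*c' 2*c' 2 - a 1*b 0*c 0*a' 0*a' 1*b' 2*b' 2*c' 1*c' 2 + a 1*b 0*c 0*a' 0*a' 1*b' 1*b' 2*c' 2*c' 2 + a 0*b 2*c 2*a' 1*a' 1*b' 0*b' 2*c' 0*c' 1 - a 0*b 2*c 2*a' 1*a' 1*b' 0*b' 1*c' 0*c' 2 - a 0*b 2*c 2*a' 0*a' 2*b' 1*b' 1*c' 0*c' 1 + a 0*b 2*c 2*a' 0*a' 2*b' 0*b' 1*c' 1*c' 1 + a 0*b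 2*c 2*a' 0*a' 1*b' 1*b' 1*c' 0*c' 2 - a 0*b 2*c 2*a' 0*a' 1*b' 0*b' 2*c' 1*c' 1 - a 0*b 2*c 1*a' 1*a' 2*b' 0*b' 2*c' 0*c' 1 + a 0*b 2*c 1*a' 1*a' 2*b' 0*b' 1*c' 0*c' 2 + a 0*b 2*c 1*a' 0*a' 2*b' 1*b' 2*c' 0*c' 1 - a 0*b 2*c 1*a' 0*a' 2*b' 0*b' 1*c' 1*c' 2 - a 0*b 2*c 1*a' 0*a' 1*b' 1*b' 2*c' 0*c' 2 + a 0*b 2*c 1*a' 0*a' 1*b' 0*b' 2*c' 1*c' 2 + a 0*b 2*c 0*a' 2*a' 2*b' 1*b' 1*c' 0*c' 1 - a 0*b 2*c 0*a' 2*a' 2*b' 0*b' 1*c' 1*c' 1 - a 0*b 2*c 0*a' 1*a' 1*b' 2*b' 2*c' 0*c' 1 + a 0*b 2*c 0*a' 1*a' 1*b' 0*b' 1*c' 2*c' 2 + a 0*b 2*c 0*a' 0*a' 1*b' 2*b' 2*c' 1*c' 1 - a 0*b 2*c 0*a' 0*a' 1*b' 1*b' 1*c' 2*c' 2 - a 0*b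 1*c 2*a' 1*a' 2*b' 0*b' 2*c' 0*c' 1 + a 0*b 1*c 2*a' 1*a' 2*b' 0*b' 1*c' 0*c' 2 + a 0*b 1*c 2*a' 0*a' 2*b' 1*b' 2*c' 0*c' 1 - a 0*b 1*c 2*a' 0*a' 2*b' 0*b' 1*c' 1*c' 2 - a 0*b 1*c 2*a' 0*a' 1*b' 1*b' 2*c' 0*c' 2 + a 0*b 1*c 2*a' 0*a' 1*b' 0*b' 2*c' 1*c' 2 + a 0*b 1*c 1*a' 2*a' 2*b' 0*b' 2*c' 0*c' 1 - a 0*b 1*c 1*a' 2*a' 2*b' 0*b' 1*c' 0*c' 2 - a 0*b 1*c 1*a' 0*a' 2*b' 2*b' 2*c' 0*c' 1 + a 0*b 1*c 1*a' 0*a' 2*b' 0*b' 1*c' 2*c' 2 + a 0*b 1*c 1*a' 0*a' 1*b' 2*b' 2*c' 0*c' 2 - a 0*b 1*c 1*a' 0*a' 1*b' 0*b' 2*c' 2*c' 2 - a 0*b 1*c 0*a' 2*a' 2*b' 1*b' 2*c' 0*c' 1 + a 0*b 1*c 0*a' 2*a' 2*b' 0*b' 1*c' 1*c' 2 + a 0*b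 1*c 0*a' 1*a' 2*b' 2*b' 2*c' 0*c' 1 - a 0*b 1*c 0*a' 1*a' 2*b' 0*b' 1*c' 2*c' 2 - a 0*b 1*c 0*a' 0*a' 1*b' 2*b' 2*c' 1*c' 2 + a 0*b 1*c 0*a' 0*a' 1*b' 1*b' 2*c' 2*c' 2 - a 0*b 0*c 2*a' 1*a' 2*b' 1*b' 1*c' 0*c' 2 + a 0*b 0*c 2*a' 1*a' 2*b' 0*b' 2*c' 1*c' 1 + a 0*b 0*c 2*a' 1*a' 1*b' 1*b' 2*c' 0*c' 2 - a 0*b 0*c 2*a' 1*a' 1*b' 0*b' 2*c' 1*c' 2 - a 0*b 0*c 2*a' 0*a' 2*b' 1*b' 2*c' 1*c' 1 + a 0*b 0*c 2*a' 0*a' 2*b' 1*b' 1*c' 1*c' 2 + a 0*b 0*c 1*a' 2*a' 2*b' 1*b' 1*c' 0*c' 2 - a 0*b 0*c 1*a' 2*a' 2*b' 0*b' 2*c' 1*c' 1 - a 0*b 0*c 1*a' 1*a' 1*b' 2*b' 2*c' 0*c' 2 + a 0*b 0*c 1*a' 1*a' 1*b' 0*b' 2*c' 2*c' 2 + a 0*b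 0*c 1*a' 0*a' 2*b' 2*b' 2*c' 1*c' 1 - a 0*b 0*c 1*a' 0*a' 2*b' 1*b' 1*c' 2*c' 2 + a 0*b 0*c 0*a' 2*a' 2*b' 1*b' 2*c' 1*c' 1 - a 0*b 0*c 0*a' 2*a' 2*b' 1*b' 1*c' 1*c' 2 - a 0*b 0*c 0*a' 1*a' 2*b' 2*b' 2*c' 1*c' 1 + a 0*b 0*c 0*a' 1*a' 2*b' 1*b' 1*c' 2*c' 2 + a 0*b 0*c 0*a' 1*a' 1*b' 2*b' 2*c' 1*c' 2 - a 0*b 0*c 0*a' 1*a' 1*b' 1*b' 2*c' 2*c' 2) * h1 + (- a 2*a 2*b 1*b 2*c 1*c 1*a' 0*b' 0*c' 0 + a 2*a 2*b 1*b 2*c 0*c 1*a' 1*b' 0*c' 0 + a 2*a 2*b 1*b 2*c 0*c 1*a' 0*b' 1*c' 0 + a 2*a 2*b 1*b 2*c 0*c 1*a' 0*b' 0*c' 1 + a 2*a 2*b 1*b 1*c 1*c 2*a' 0*b' 0*c' 0 - a 2*a 2*b 1*b 1*c 0*c 1*a' 2*b' 0*c' 0 - a 2*a 2*b 1*b 1*c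 0*c 1*a' 0*b' 2*c' 0 - a 2*a 2*b 1*b 1*c 0*c 1*a' 0*b' 0*c' 2 - a 2*a 2*b 0*b 2*c 0*c 1*a' 1*b' 1*c' 0 - a 2*a 2*b 0*b 2*c 0*c 1*a' 1*b' 0*c' 1 - a 2*a 2*b 0*b 2*c 0*c 1*a' 0*b' 1*c' 1 + a 2*a 2*b 0*b 2*c 0*c 0*a' 1*b' 1*c' 1 - a 2*a 2*b 0*b 1*c 1*c 2*a' 1*b' 0*c' 0 - a 2*a 2*b 0*b 1*c 1*c 2*a' 0*b' 1*c' 0 - a 2*a 2*b 0*b 1*c 1*c 2*a' 0*b' 0*c' 1 + a 2*a 2*b 0*b 1*c 1*c 1*a' 2*b' 0*c' 0 + a 2*a 2*b 0*b 1*c 1*c 1*a' 0*b' 2*c' 0 + a 2*a 2*b 0*b 1*c 1*c 1*a' 0*b' 0*c' 2 + a 2*a 2*b 0*b 1*c 0*c 1*a' 2*b' 1*c' 0 + a 2*a 2*b 0*b 1*c 0*c 1*a' 2*b' 0*c' 1 + a 2*a 2*b 0*b 1*c 0*c 1*a' 1*b' 2*c' 0 + a 2*a 2*b 0*b 1*c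 0*c 1*a' 1*b' 0*c' 2 + a 2*a 2*b 0*b 1*c 0*c 1*a' 0*b' 2*c' 1 + a 2*a 2*b 0*b 1*c 0*c 1*a' 0*b' 1*c' 2 + a 2*a 2*b 0*b 0*c 1*c 2*a' 1*b' 1*c' 0 + a 2*a 2*b 0*b 0*c 1*c 2*a' 1*b' 0*c' 1 + a 2*a 2*b 0*b 0*c 1*c 2*a' 0*b' 1*c' 1 - a 2*a 2*b 0*b 0*c 1*c 1*a' 2*b' 1*c' 0 - a 2*a 2*b 0*b 0*c 1*c 1*a' 2*b' 0*c' 1 - a 2*a 2*b 0*b 0*c 1*c 1*a' 1*b' 2*c' 0 - a 2*a 2*b 0*b 0*c 1*c 1*a' 1*b' 0*c' 2 - a 2*a 2*b 0*b 0*c 1*c 1*a' 0*b' 2*c' 1 - a 2*a 2*b 0*b 0*c 1*c 1*a' 0*b' 1*c' 2 - a 2*a 2*b 0*b 0*c 0*c 2*a' 1*b' 1*c' 1 + a 1*a 2*b 2*b 2*c 1*c 1*a' 0*b' 0*c' 0 - a 1*a 2*b 2*b 2*c 0*c 1*a' 1*b' 0*c' 0 - a 1*a 2*b 2*b 2*c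 0*c 1*a' 0*b' 1*c' 0 - a 1*a 2*b 2*b 2*c 0*c 1*a' 0*b' 0*c' 1 - a 1*a 2*b 1*b 2*c 0*c 2*a' 1*b' 0*c' 0 - a 1*a 2*b 1*b 2*c 0*c 2*a' 0*b' 1*c' 0 - a 1*a 2*b 1*b 2*c 0*c 2*a' 0*b' 0*c' 1 + a 1*a 2*b 1*b 2*c 0*c 1*a' 2*b' 0*c' 0 + a 1*a 2*b 1*b 2*c 0*c 1*a' 0*b' 2*c' 0 + a 1*a 2*b 1*b 2*c 0*c 1*a' 0*b' 0*c' 2 + a 1*a 2*b 1*b 2*c 0*c 0*a' 2*b' 1*c' 0 + a 1*a 2*b 1*b 2*c 0*c 0*a' 2*b' 0*c' 1 + a 1*a 2*b 1*b 2*c 0*c 0*a' 1*b' 2*c' 0 + a 1*a 2*b 1*b 2*c 0*c 0*a' 1*b' 0*c' 2 + a 1*a 2*b 1*b 2*c 0*c 0*a' 0*b' 2*c' 1 + a 1*a 2*b 1*b 2*c 0*c 0*a' 0*b' 1*c' 2 - a 1*a 2*b 1*b 1*c 2*c 2*a' 0*b' 0*c' 0 + a 1*a 2*b 1*b 1*c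 0*c 2*a' 2*b' 0*c' 0 + a 1*a 2*b 1*b 1*c 0*c 2*a' 0*b' 2*c' 0 + a 1*a 2*b 1*b 1*c 0*c 2*a' 0*b' 0*c' 2 - a 1*a 2*b 1*b 1*c 0*c 0*a' 2*b' 2*c' 0 - a 1*a 2*b 1*b 1*c 0*c 0*a' 2*b' 0*c' 2 - a 1*a 2*b 1*b 1*c 0*c 0*a' 0*b' 2*c' 2 + a 1*a 2*b 0*b 2*c 1*c 2*a' 1*b' 0*c' 0 + a 1*a 2*b 0*b 2*c 1*c 2*a' 0*b' 1*c' 0 + a 1*a 2*b 0*b 2*c 1*c 2*a' 0*b' 0*c' 1 - a 1*a 2*b 0*b 2*c 1*c 1*a' 2*b' 0*c' 0 - a 1*a 2*b 0*b 2*c 1*c 1*a' 0*b' 2*c' 0 - a 1*a 2*b 0*b 2*c 1*c 1*a' 0*b' 0*c' 2 + a 1*a 2*b 0*b 2*c 0*c 2*a' 1*b' 1*c' 0 + a 1*a 2*b 0*b 2*c 0*c 2*a' 1*b' 0*c' 1 + a 1*a 2*b 0*b 2*c 0*c 2*a' 0*b' 1*c' 1 - a 1*a 2*b 0*b 2*c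 0*c 1*a' 2*b' 1*c' 0 - a 1*a 2*b 0*b 2*c 0*c 1*a' 2*b' 0*c' 1 - a 1*a 2*b 0*b 2*c 0*c 1*a' 1*b' 2*c' 0 - a 1*a 2*b 0*b 2*c 0*c 1*a' 1*b' 0*c' 2 - a 1*a 2*b 0*b 2*c 0*c 1*a' 0*b' 2*c' 1 - a 1*a 2*b 0*b 2*c 0*c 1*a' 0*b' 1*c' 2 - a 1*a 2*b 0*b 2*c 0*c 0*a' 2*b' 1*c' 1 - a 1*a 2*b 0*b 2*c 0*c 0*a' 1*b' 2*c' 1 - a 1*a 2*b 0*b 2*c 0*c 0*a' 1*b' 1*c' 2 + a 1*a 2*b 0*b 1*c 2*c 2*a' 1*b' 0*c' 0 + a 1*a 2*b 0*b 1*c 2*c 2*a' 0*b' 1*c' 0 + a 1*a 2*b 0*b 1*c 2*c 2*a' 0*b' 0*c' 1 - a 1*a 2*b 0*b 1*c 1*c 2*a' 2*b' 0*c' 0 - a 1*a 2*b 0*b 1*c 1*c 2*a' 0*b' 2*c' 0 - a 1*a 2*b 0*b 1*c 1*c 2*a' 0*b' 0*c' 2 - a 1*a 2*b 0*b 1*c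 0*c 2*a' 2*b' 1*c' 0 - a 1*a 2*b 0*b 1*c 0*c 2*a' 2*b' 0*c' 1 - a 1*a 2*b 0*b 1*c 0*c 2*a' 1*b' 2*c' 0 - a 1*a 2*b 0*b 1*c 0*c 2*a' 1*b' 0*c' 2 - a 1*a 2*b 0*b 1*c 0*c 2*a' 0*b' 2*c' 1 - a 1*a 2*b 0*b 1*c 0*c 2*a' 0*b' 1*c' 2 + a 1*a 2*b 0*b 1*c 0*c 1*a' 2*b' 2*c' 0 + a 1*a 2*b 0*b 1*c 0*c 1*a' 2*b' 0*c' 2 + a 1*a 2*b 0*b 1*c 0*c 1*a' 0*b' 2*c' 2 + a 1*a 2*b 0*b 1*c 0*c 0*a' 2*b' 2*c' 1 + a 1*a 2*b 0*b 1*c 0*c 0*a' 2*b' 1*c' 2 + a 1*a 2*b 0*b 1*c 0*c 0*a' 1*b' 2*c' 2 - a 1*a 2*b 0*b 0*c 2*c 2*a' 1*b' 1*c' 0 - a 1*a 2*b 0*b 0*c 2*c 2*a' 1*b' 0*c' 1 - a 1*a 2*b 0*b 0*c 2*c 2*a' 0*b' 1*c' 1 + a 1*a 2*b 0*b 0*c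 1*c 2*a' 2*b' 1*c' 0 + a 1*a 2*b 0*b 0*c 1*c 2*a' 2*b' 0*c' 1 + a 1*a 2*b 0*b 0*c 1*c 2*a' 1*b' 2*c' 0 + a 1*a 2*b 0*b 0*c 1*c 2*a' 1*b' 0*c' 2 + a 1*a 2*b 0*b 0*c 1*c 2*a' 0*b' 2*c' 1 + a 1*a 2*b 0*b 0*c 1*c 2*a' 0*b' 1*c' 2 + a 1*a 2*b 0*b 0*c 0*c 2*a' 2*b' 1*c' 1 + a 1*a 2*b 0*b 0*c 0*c 2*a' 1*b' 2*c' 1 + a 1*a 2*b 0*b 0*c 0*c 2*a' 1*b' 1*c' 2 - a 1*a 2*b 0*b 0*c 0*c 1*a' 2*b' 2*c' 1 - a 1*a 2*b 0*b 0*c 0*c 1*a' 2*b' 1*c' 2 - a 1*a 2*b 0*b 0*c 0*c 1*a' 1*b' 2*c' 2 - a 1*a 1*b 2*b 2*c 1*c 2*a' 0*b' 0*c' 0 + a 1*a 1*b 2*b 2*c 0*c 2*a' 1*b' 0*c' 0 + a 1*a 1*b 2*b 2*c 0*c 2*a' 0*b' 1*c' 0 + a 1*a 1*b 2*b 2*c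 0*c 2*a' 0*b' 0*c' 1 - a 1*a 1*b 2*b 2*c 0*c 0*a' 2*b' 1*c' 0 - a 1*a 1*b 2*b 2*c 0*c 0*a' 2*b' 0*c' 1 - a 1*a 1*b 2*b 2*c 0*c 0*a' 1*b' 2*c' 0 - a 1*a 1*b 2*b 2*c 0*c 0*a' 1*b' 0*c' 2 - a 1*a 1*b 2*b 2*c 0*c 0*a' 0*b' 2*c' 1 - a 1*a 1*b 2*b 2*c 0*c 0*a' 0*b' 1*c' 2 + a 1*a 1*b 1*b 2*c 2*c 2*a' 0*b' 0*c' 0 - a 1*a 1*b 1*b 2*c 0*c 2*a' 2*b' 0*c' 0 - a 1*a 1*b 1*b 2*c 0*c 2*a' 0*b' 2*c' 0 - a 1*a 1*b 1*b 2*c 0*c 2*a' 0*b' 0*c' 2 + a 1*a 1*b 1*b 2*c 0*c 0*a' 2*b' 2*c' 0 + a 1*a 1*b 1*b 2*c 0*c 0*a' 2*b' 0*c' 2 + a 1*a 1*b 1*b 2*c 0*c 0*a' 0*b' 2*c' 2 - a 1*a 1*b 0*b 2*c 2*c 2*a' 1*b' 0*c' 0 - a 1*a 1*b 0*b 2*c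 2*c 2*a' 0*b' 1*c' 0 - a 1*a 1*b 0*b 2*c 2*c 2*a' 0*b' 0*c' 1 + a 1*a 1*b 0*b 2*c 1*c 2*a' 2*b' 0*c' 0 + a 1*a 1*b 0*b 2*c 1*c 2*a' 0*b' 2*c' 0 + a 1*a 1*b 0*b 2*c 1*c 2*a' 0*b' 0*c' 2 + a 1*a 1*b 0*b 2*c 0*c 2*a' 2*b' 1*c' 0 + a 1*a 1*b 0*b 2*c 0*c 2*a' 2*b' 0*c' 1 + a 1*a 1*b 0*b 2*c 0*c 2*a' 1*b' 2*c' 0 + a 1*a 1*b 0*b 2*c 0*c 2*a' 1*b' 0*c' 2 + a 1*a 1*b 0*b 2*c 0*c 2*a' 0*b' 2*c' 1 + a 1*a 1*b 0*b 2*c 0*c 2*a' 0*b' 1*c' 2 - a 1*a 1*b 0*b 2*c 0*c 1*a' 2*b' 2*c' 0 - a 1*a 1*b 0*b 2*c 0*c 1*a' 2*b' 0*c' 2 - a 1*a 1*b 0*b 2*c 0*c 1*a' 0*b' 2*c' 2 - a 1*a 1*b 0*b 1*c 0*c 0*a' 2*b' 2*c' 2 + a 1*a 1*b 0*b 0*c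 0*c 1*a' 2*b' 2*c' 2 + a 0*a 2*b 2*b 2*c 0*c 1*a' 1*b' 1*c' 0 + a 0*a 2*b 2*b 2*c 0*c 1*a' 1*b' 0*c' 1 + a 0*a 2*b 2*b 2*c 0*c 1*a' 0*b' 1*c' 1 - a 0*a 2*b 2*b 2*c 0*c 0*a' 1*b' 1*c' 1 - a 0*a 2*b 1*b 2*c 0*c 1*a' 2*b' 1*c' 0 - a 0*a 2*b 1*b 2*c 0*c 1*a' 2*b' 0*c' 1 - a 0*a 2*b 1*b 2*c 0*c 1*a' 1*b' 2*c' 0 - a 0*a 2*b 1*b 2*c 0*c 1*a' 1*b' 0*c' 2 - a 0*a 2*b 1*b 2*c 0*c 1*a' 0*b' 2*c' 1 - a 0*a 2*b 1*b 2*c 0*c 1*a' 0*b' 1*c' 2 + a 0*a 2*b 1*b 1*c 0*c 1*a' 2*b' 2*c' 0 + a 0*a 2*b 1*b 1*c 0*c 1*a' 2*b' 0*c' 2 + a 0*a 2*b 1*b 1*c 0*c 1*a' 0*b' 2*c' 2 - a 0*a 2*b 0*b 2*c 1*c 2*a' 1*b' 1*c' 0 - a 0*a 2*b 0*b 2*c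 1*c 2*a' 1*b' 0*c' 1 - a 0*a 2*b 0*b 2*c 1*c 2*a' 0*b' 1*c' 1 + a 0*a 2*b 0*b 2*c 1*c 1*a' 2*b' 1*c' 0 + a 0*a 2*b 0*b 2*c 1*c 1*a' 2*b' 0*c' 1 + a 0*a 2*b 0*b 2*c 1*c 1*a' 1*b' 2*c' 0 + a 0*a 2*b 0*b 2*c 1*c 1*a' 1*b' 0*c' 2 + a 0*a 2*b 0*b 2*c 1*c 1*a' 0*b' 2*c' 1 + a 0*a 2*b 0*b 2*c 1*c 1*a' 0*b' 1*c' 2 + a 0*a 2*b 0*b 2*c 0*c 1*a' 2*b' 1*c' 1 + a 0*a 2*b 0*b 2*c 0*c 1*a' 1*b' 2*c' 1 + a 0*a 2*b 0*b 2*c 0*c 1*a' 1*b' 1*c' 2 - a 0*a 2*b 0*b 1*c 1*c 1*a' 2*b' 2*c' 0 - a 0*a 2*b 0*b 1*c 1*c 1*a' 2*b' 0*c' 2 - a 0*a 2*b 0*b 1*c 1*c 1*a' 0*b' 2*c' 2 - a 0*a 2*b 0*b 1*c 0*c 1*a' 2*b' 2*c' 1 - a 0*a 2*b 0*b 1*c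 0*c 1*a' 2*b' 1*c' 2 - a 0*a 2*b 0*b 1*c 0*c 1*a' 1*b' 2*c' 2 + a 0*a 2*b 0*b 0*c 2*c 2*a' 1*b' 1*c' 1 - a 0*a 2*b 0*b 0*c 1*c 2*a' 2*b' 1*c' 1 - a 0*a 2*b 0*b 0*c 1*c 2*a' 1*b' 2*c' 1 - a 0*a 2*b 0*b 0*c 1*c 2*a' 1*b' 1*c' 2 + a 0*a 2*b 0*b 0*c 1*c 1*a' 2*b' 2*c' 1 + a 0*a 2*b 0*b 0*c 1*c 1*a' 2*b' 1*c' 2 + a 0*a 2*b 0*b 0*c 1*c 1*a' 1*b' 2*c' 2 - a 0*a 1*b 2*b 2*c 0*c 2*a' 1*b' 1*c' 0 - a 0*a 1*b 2*b 2*c 0*c 2*a' 1*b' 0*c' 1 - a 0*a 1*b 2*b 2*c 0*c 2*a' 0*b' 1*c' 1 + a 0*a 1*b 2*b 2*c 0*c 1*a' 2*b' 1*c' 0 + a 0*a 1*b 2*b 2*c 0*c 1*a' 2*b' 0*c' 1 + a 0*a 1*b 2*b 2*c 0*c 1*a' 1*b' 2*c' 0 + a 0*a 1*b 2*b 2*c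 0*c 1*a' 1*b' 0*c' 2 + a 0*a 1*b 2*b 2*c 0*c 1*a' 0*b' 2*c' 1 + a 0*a 1*b 2*b 2*c 0*c 1*a' 0*b' 1*c' 2 + a 0*a 1*b 2*b 2*c 0*c 0*a' 2*b' 1*c' 1 + a 0*a 1*b 2*b 2*c 0*c 0*a' 1*b' 2*c' 1 + a 0*a 1*b 2*b 2*c 0*c 0*a' 1*b' 1*c' 2 - a 0*a 1*b 1*b 2*c 0*c 1*a' 2*b' 2*c' 0 - a 0*a 1*b 1*b 2*c 0*c 1*a' 2*b' 0*c' 2 - a 0*a 1*b 1*b 2*c 0*c 1*a' 0*b' 2*c' 2 - a 0*a 1*b 1*b 2*c 0*c 0*a' 2*b' 2*c' 1 - a 0*a 1*b 1*b 2*c 0*c 0*a' 2*b' 1*c' 2 - a 0*a 1*b 1*b 2*c 0*c 0*a' 1*b' 2*c' 2 + a 0*a 1*b 1*b 1*c 0*c 0*a' 2*b' 2*c' 2 + a 0*a 1*b 0*b 2*c 2*c 2*a' 1*b' 1*c' 0 + a 0*a 1*b 0*b 2*c 2*c 2*a' 1*b' 0*c' 1 + a 0*a 1*b 0*b 2*c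 2*c 2*a' 0*b' 1*c' 1 - a 0*a 1*b 0*b 2*c 1*c 2*a' 2*b' 1*c' 0 - a 0*a 1*b 0*b 2*c 1*c 2*a' 2*b' 0*c' 1 - a 0*a 1*b 0*b 2*c 1*c 2*a' 1*b' 2*c' 0 - a 0*a 1*b 0*b 2*c 1*c 2*a' 1*b' 0*c' 2 - a 0*a 1*b 0*b 2*c 1*c 2*a' 0*b' 2*c' 1 - a 0*a 1*b 0*b 2*c 1*c 2*a' 0*b' 1*c' 2 + a 0*a 1*b 0*b 2*c 1*c 1*a' 2*b' 2*c' 0 + a 0*a 1*b 0*b 2*c 1*c 1*a' 2*b' 0*c' 2 + a 0*a 1*b 0*b 2*c 1*c 1*a' 0*b' 2*c' 2 - a 0*a 1*b 0*b 2*c 0*c 2*a' 2*b' 1*c' 1 - a 0*a 1*b 0*b 2*c 0*c 2*a' 1*b' 2*c' 1 - a 0*a 1*b 0*b 2*c 0*c 2*a' 1*b' 1*c' 2 + a 0*a 1*b 0*b 2*c 0*c 1*a' 2*b' 2*c' 1 + a 0*a 1*b 0*b 2*c 0*c 1*a' 2*b' 1*c' 2 + a 0*a 1*b 0*b 2*c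 0*c 1*a' 1*b' 2*c' 2 - a 0*a 1*b 0*b 0*c 1*c 1*a' 2*b' 2*c' 2 + a 0*a 0*b 2*b 2*c 0*c 2*a' 1*b' 1*c' 1 - a 0*a 0*b 2*b 2*c 0*c 1*a' 2*b' 1*c' 1 - a 0*a 0*b 2*b 2*c 0*c 1*a' 1*b' 2*c' 1 - a 0*a 0*b 2*b 2*c 0*c 1*a' 1*b' 1*c' 2 + a 0*a 0*b 1*b 2*c 0*c 1*a' 2*b' 2*c' 1 + a 0*a 0*b 1*b 2*c 0*c 1*a' 2*b' 1*c' 2 + a 0*a 0*b 1*b 2*c 0*c 1*a' 1*b' 2*c' 2 - a 0*a 0*b 1*b 1*c 0*c 1*a' 2*b' 2*c' 2 - a 0*a 0*b 0*b 2*c 2*c 2*a' 1*b' 1*c' 1 + a 0*a 0*b 0*b 2*c 1*c 2*a' 2*b' 1*c' 1 + a 0*a 0*b 0*b 2*c 1*c 2*a' 1*b' 2*c' 1 + a 0*a 0*b 0*b 2*c 1*c 2*a' 1*b' 1*c' 2 - a 0*a 0*b 0*b 2*c 1*c 1*a' 2*b' 2*c' 1 - a 0*a 0*b 0*b 2*c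 1*c 1*a' 2*b' 1*c' 2 - a 0*a 0*b 0*b 2*c 1*c 1*a' 1*b' 2*c' 2 + a 0*a 0*b 0*b 1*c 1*c 1*a' 2*b' 2*c' 2) * h2
end
end

section
/- (Desargues) Two triangles ABC and A'B'C' in the projective plane are perspective from a point (the lines AA', BB', CC' are concurrent) if and only if they are perspective from a line (the points P = BC ∩ B'C', Q = AC ∩ A'C', R = AB ∩ A'B' are collinear). -/
open Matrix

noncomputable section

lemma pcross_apply (a b : PPt) : pcross a b =
    ![a 1 * b 2 - a 2 * b 1, a 2 * b 0 - a 0 * b 2, a 0 * b 1 - a 1 * b 0] := rfl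

lemma det3 (a b c : PPt) : Matrix.det (Matrix.of ![a, b, c]) =
    a 0 * (b 1 * c 2 - b 2 * c 1) - a 1 * (b 0 * c 2 - b 2 * c 0)
      + a 2 * (b 0 * c 1 - b 1 * c 0) := by
  simp [Matrix.det_fin_three]; ring

lemma key (a b c a' b' c' : PPt) :
    Matrix.det (Matrix.of ![pcross (pcross b c) (pcross b' c'),
        pcross (pcross a c) (pcross a' c'), pcross (pcross a b) (pcross a' b')]) =
    Matrix.det (Matrix.of ![a, b, c]) * Matrix.det (Matrix.of ![a', b', c']) *
      Matrix.det (Matrix.of ![pcross a a', pcross b b', pcross c c']) := by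
  simp only [det3, pcross_apply]
  simp only [Matrix.cons_val_zero, Matrix.cons_val_one, Matrix.head_cons,
    Matrix.cons_val_two, Matrix.tail_cons]
  ring

lemma tripleprod (a b S : PPt) : Matrix.det (Matrix.of ![a, b, S]) = pcross a b ⬝ᵥ S := by
  simp [det3, pcross_apply, dotProduct, Fin.sum_univ_three]; ring

/-- **Desargues' theorem.** Two triangles `abc` and `a'b'c'` (no common vertices, no
common sides) are perspective from a point iff they are perspective from a line:
the lines `aa'`, `bb'`, `cc'` are concurrent iff the points `P = bc ∩ b'c'`,
`Q = ac ∩ a'c'`, `R = ab ∩ a'b'` are collinear. -/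
theorem desargues (a b c a' b' c' P Q R : PPt)
    (htri : ¬ collin a b c) (htri' : ¬ collin a' b' c')
    (haa' : pcross a a' ≠ 0) (hbb' : pcross b b' ≠ 0) (hcc' : pcross c c' ≠ 0)
    (hP : P = pcross (pcross b c) (pcross b' c'))
    (hQ : Q = pcross (pcross a c) (pcross a' c'))
    (hR : R = pcross (pcross a b) (pcross a' b'))
    (hP0 : P ≠ 0) (hQ0 : Q ≠ 0) (hR0 : R ≠ 0) :
    (∃ S : PPt, S ≠ 0 ∧ collin a a' S ∧ collin b b' S ∧ collin c c' S) ↔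
      collin P Q R := by
  subst hP hQ hR
  set M : Matrix (Fin 3) (Fin 3) ℝ := Matrix.of ![pcross a a', pcross b b', pcross c c']
    with hM
  have hiff : ∀ S : PPt,
      (collin a a' S ∧ collin b b' S ∧ collin c c' S) ↔ M *ᵥ S = 0 := by
    intro S
    have e0 : (M *ᵥ S) 0 = pcross a a' ⬝ᵥ S := rfl
    have e1 : (M *ᵥ S) 1 = pcross b b' ⬝ᵥ S := rfl
    have e2 : (M *ᵥ S) 2 = pcross c c' ⬝ᵥ S := rfl
    simp only [collin, tripleprod]
    constructor
    · rintro ⟨h1, h2, h3⟩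
      funext i
      fin_cases i
      · exact h1
      · exact h2
      · exact h3
    · intro h
      exact ⟨e0 ▸ congrFun h 0, e1 ▸ congrFun h 1, e2 ▸ congrFun h 2⟩
  have hL : (∃ S : PPt, S ≠ 0 ∧ collin a a' S ∧ collin b b' S ∧ collin c c' S) ↔
      M.det = 0 := by
    rw [← Matrix.exists_mulVec_eq_zero_iff]
    constructor
    · rintro ⟨S, hS0, h⟩; exact ⟨S, hS0, (hiff S).1 h⟩
    · rintro ⟨S, hS0, h⟩; exact ⟨S, hS0, (hiff S).2 h⟩
  rw [hL]
  unfold collin at htri htri' ⊢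
  rw [key, mul_eq_zero, mul_eq_zero]
  tauto
end
end

section
/- (Generalized Sharygin, part 2) Let A₁A₂A₃A₄ be a complete quadrangle, {i,j,k,s} = {1,2,3,4}, U_js ∈ A_jA_s, U_ik ∈ A_iA_k. Set I = A_iA_k ∩ A_jA_s, M = A_iU_js ∩ A_jA_k, N = A_jU_ik ∩ A_iA_s, and J = A_iM ∩ A_jN. Then the lines A_sM, A_kN, and IJ are concurrent. -/
open Matrix

noncomputable section

namespace SharyginAux

lemma pcross0 (a b : PPt) : pcross a b 0 = a 1 * b 2 - a 2 * b 1 := by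
  simp [pcross, crossProduct]
lemma pcross1 (a b : PPt) : pcross a b 1 = a 2 * b 0 - a 0 * b 2 := by
  simp [pcross, crossProduct]
lemma pcross2 (a b : PPt) : pcross a b 2 = a 0 * b 1 - a 1 * b 0 := by
  simp [pcross, crossProduct]

lemma dt_eq (a b c : PPt) : Matrix.det (Matrix.of ![a, b, c]) = pcross a b ⬝ᵥ c := by
  simp [pcross, crossProduct, det_fin_three, dotProduct, Fin.sum_univ_three]
  ring

lemma collin_iff (a b c : PPt) : collin a b c ↔ pcross a b ⬝ᵥ c = 0 := by
  unfold collin; rw [dt_eq]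

lemma exists_ne_zero {a : PPt} (ha : a ≠ 0) : ∃ m, a m ≠ 0 := by
  by_contra h
  push_neg at h
  exact ha (funext fun m => h m)

/-- Decomposition: a point on the line through a, b is a combination of a and b. -/
lemma decomp (a b c : PPt) (hab : pcross a b ≠ 0) (h : pcross a b ⬝ᵥ c = 0) :
    ∃ x y : ℝ, ∀ m, c m = x * a m + y * b m := by
  set n0 := a 1 * b 2 - a 2 * b 1 with hn0
  set n1 := a 2 * b 0 - a 0 * b 2 with hn1
  set n2 := a 0 * b 1 - a 1 * b 0 with hn2
  have hsc : n0 * c 0 + n1 * c 1 + n2 * c 2 = 0 := by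
    have := h
    simp only [dotProduct, Fin.sum_univ_three, pcross0, pcross1, pcross2] at this
    linear_combination this
  have hK : n0 ^ 2 + n1 ^ 2 + n2 ^ 2 ≠ 0 := by
    intro h0
    apply hab
    funext m
    have e0 : n0 = 0 := by nlinarith [sq_nonneg n0, sq_nonneg n1, sq_nonneg n2]
    have e1 : n1 = 0 := by nlinarith [sq_nonneg n0, sq_nonneg n1, sq_nonneg n2]
    have e2 : n2 = 0 := by nlinarith [sq_nonneg n0, sq_nonneg n1, sq_nonneg n2]
    fin_cases m
    · simpa [pcross0] using e0
    · simpa [pcross1] using e1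
    · simpa [pcross2] using e2
  set K := n0 ^ 2 + n1 ^ 2 + n2 ^ 2 with hKdef
  set ca := c 0 * a 0 + c 1 * a 1 + c 2 * a 2 with hca
  set cb := c 0 * b 0 + c 1 * b 1 + c 2 * b 2 with hcb
  set aa := a 0 * a 0 + a 1 * a 1 + a 2 * a 2 with haa
  set bb := b 0 * b 0 + b 1 * b 1 + b 2 * b 2 with hbb
  set ab := a 0 * b 0 + a 1 * b 1 + a 2 * b 2 with hab2
  refine ⟨(ca * bb - cb * ab) / K, (cb * aa - ca * ab) / K, fun m => ?_⟩
  have key : ∀ m : Fin 3, K * c m = (ca * bb - cb * ab) * a m + (cb * aa - ca * ab) * b m := by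
    intro m
    fin_cases m
    · show K * c 0 = (ca * bb - cb * ab) * a 0 + (cb * aa - ca * ab) * b 0
      simp only [hKdef, hca, hcb, haa, hbb, hab2, hn0, hn1, hn2]
      linear_combination (n0 : ℝ) * hsc
    · show K * c 1 = (ca * bb - cb * ab) * a 1 + (cb * aa - ca * ab) * b 1
      simp only [hKdef, hca, hcb, haa, hbb, hab2, hn0, hn1, hn2]
      linear_combination (n1 : ℝ) * hsc
    · show K * c 2 = (ca * bb - cb * ab) * a 2 + (cb * aa - ca * ab) * b 2
      simp only [hKdef, hca, hcb, haa, hbb, hab2, hn0, hn1, hn2]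
      linear_combination (n2 : ℝ) * hsc
  have := key m
  field_simp
  linear_combination this

/-- If the cross product vanishes, one vector is a multiple of the other. -/
lemma parallel (a b : PPt) (ha : a ≠ 0) (hab : pcross a b = 0) :
    ∃ c : ℝ, ∀ m, b m = c * a m := by
  have h0 : a 1 * b 2 - a 2 * b 1 = 0 := by
    have := congrFun hab 0; simpa [pcross0] using this
  have h1 : a 2 * b 0 - a 0 * b 2 = 0 := by
    have := congrFun hab 1; simpa [pcross1] using this
  have h2 : a 0 * b 1 - a 1 * b 0 = 0 := by
    have := congrFun hab 2; simpa [pcross2] using this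
  have trich : a 0 ≠ 0 ∨ a 1 ≠ 0 ∨ a 2 ≠ 0 := by
    by_contra hcon
    push_neg at hcon
    apply ha
    funext m
    fin_cases m
    exacts [hcon.1, hcon.2.1, hcon.2.2]
  rcases trich with hm | hm | hm
  · refine ⟨b 0 / a 0, fun m => ?_⟩
    fin_cases m
    · show b 0 = b 0 / a 0 * a 0
      field_simp
    · show b 1 = b 0 / a 0 * a 1
      field_simp
      first
      | linear_combination h2
      | linear_combination -h2
    · show b 2 = b 0 / a 0 * a 2
      field_simp
      first
      | linear_combination h1
      | linear_combination -h1
  · refine ⟨b 1 / a 1, fun m => ?_⟩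
    fin_cases m
    · show b 0 = b 1 / a 1 * a 0
      field_simp
      first
      | linear_combination h2
      | linear_combination -h2
    · show b 1 = b 1 / a 1 * a 1
      field_simp
    · show b 2 = b 1 / a 1 * a 2
      field_simp
      first
      | linear_combination h0
      | linear_combination -h0
  · refine ⟨b 2 / a 2, fun m => ?_⟩
    fin_cases m
    · show b 0 = b 2 / a 2 * a 0
      field_simp
      first
      | linear_combination h1
      | linear_combination -h1
    · show b 1 = b 2 / a 2 * a 1
      field_simp
      first
      | linear_combination h0
      | linear_combination -h0
    · show b 2 = b 2 / a 2 * a 2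
      field_simp

lemma exists_perp (a : PPt) (ha : a ≠ 0) : ∃ P : PPt, P ≠ 0 ∧ a ⬝ᵥ P = 0 := by
  obtain ⟨m, hm⟩ := exists_ne_zero ha
  fin_cases m
  · refine ⟨![-(a 1), a 0, 0], ?_, ?_⟩
    · intro h; apply hm; simpa using congrFun h 1
    · simp [dotProduct, Fin.sum_univ_three]; ring
  · refine ⟨![-(a 1), a 0, 0], ?_, ?_⟩
    · intro h; apply hm; simpa using congrFun h 0
    · simp [dotProduct, Fin.sum_univ_three]; ring
  · refine ⟨![0, -(a 2), a 1], ?_, ?_⟩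
    · intro h; apply hm; simpa using congrFun h 1
    · simp [dotProduct, Fin.sum_univ_three]; ring

/-- Three nonzero concurrent lines have a common nonzero point. -/
lemma concur (L1 L2 L3 : PPt) (h1 : L1 ≠ 0) (h2 : L2 ≠ 0) (h3 : L3 ≠ 0)
    (hD : L1 ⬝ᵥ pcross L2 L3 = 0) :
    ∃ P : PPt, P ≠ 0 ∧ L1 ⬝ᵥ P = 0 ∧ L2 ⬝ᵥ P = 0 ∧ L3 ⬝ᵥ P = 0 := by
  have self1 : ∀ u v : PPt, u ⬝ᵥ pcross u v = 0 := by
    intro u v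
    simp [dotProduct, Fin.sum_univ_three, pcross0, pcross1, pcross2]; ring
  have self2 : ∀ u v : PPt, v ⬝ᵥ pcross u v = 0 := by
    intro u v
    simp [dotProduct, Fin.sum_univ_three, pcross0, pcross1, pcross2]; ring
  by_cases hp : pcross L2 L3 = 0
  · obtain ⟨c, hc⟩ := parallel L2 L3 h2 hp
    by_cases hq : pcross L1 L2 = 0
    · obtain ⟨c', hc'⟩ := parallel L1 L2 h1 hq
      obtain ⟨P, hP0, hP1⟩ := exists_perp L1 h1
      refine ⟨P, hP0, hP1, ?_, ?_⟩
      · have : L2 ⬝ᵥ P = c' * (L1 ⬝ᵥ P) := by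
          simp only [dotProduct, Fin.sum_univ_three, hc']; ring
        rw [this, hP1, mul_zero]
      · have hL2P : L2 ⬝ᵥ P = 0 := by
          have : L2 ⬝ᵥ P = c' * (L1 ⬝ᵥ P) := by
            simp only [dotProduct, Fin.sum_univ_three, hc']; ring
          rw [this, hP1, mul_zero]
        have : L3 ⬝ᵥ P = c * (L2 ⬝ᵥ P) := by
          simp only [dotProduct, Fin.sum_univ_three, hc]; ring
        rw [this, hL2P, mul_zero]
    · refine ⟨pcross L1 L2, hq, self1 _ _, self2 _ _, ?_⟩
      have : L3 ⬝ᵥ pcross L1 L2 = c * (L2 ⬝ᵥ pcross L1 L2) := by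
        simp only [dotProduct, Fin.sum_univ_three, hc]; ring
      rw [this, self2, mul_zero]
  · exact ⟨pcross L2 L3, hp, hD, self1 _ _, self2 _ _⟩

lemma ppc0 (a b c d : PPt) :
    pcross (pcross a b) (pcross c d) 0 =
      (pcross a c ⬝ᵥ d) * b 0 - (pcross b c ⬝ᵥ d) * a 0 := by
  simp only [dotProduct, Fin.sum_univ_three, pcross0, pcross1, pcross2]; ring

lemma ppc1 (a b c d : PPt) :
    pcross (pcross a b) (pcross c d) 1 =
      (pcross a c ⬝ᵥ d) * b 1 - (pcross b c ⬝ᵥ d) * a 1 := by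
  simp only [dotProduct, Fin.sum_univ_three, pcross0, pcross1, pcross2]; ring

lemma ppc2 (a b c d : PPt) :
    pcross (pcross a b) (pcross c d) 2 =
      (pcross a c ⬝ᵥ d) * b 2 - (pcross b c ⬝ᵥ d) * a 2 := by
  simp only [dotProduct, Fin.sum_univ_three, pcross0, pcross1, pcross2]; ring

lemma pcross_pcross (a b c d : PPt) (m : Fin 3) :
    pcross (pcross a b) (pcross c d) m =
      (pcross a c ⬝ᵥ d) * b m - (pcross b c ⬝ᵥ d) * a m := by
  fin_cases m
  exacts [ppc0 a b c d, ppc1 a b c d, ppc2 a b c d]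

lemma dot_comb (L N K : PPt) (α β : ℝ) (X : PPt)
    (hX : ∀ m, X m = α * N m - β * K m) :
    L ⬝ᵥ X = α * (L ⬝ᵥ N) - β * (L ⬝ᵥ K) := by
  simp only [dotProduct, Fin.sum_univ_three, hX]; ring

end SharyginAux

open SharyginAux
set_option maxHeartbeats 4000000 in
/-- **Generalized Sharygin's problem, part 2.** With the quadrangle `A`, a permutation
`i j k s` of the indices, `u₁ ∈ A_jA_s`, `u₂ ∈ A_iA_k`, `I = A_iA_k ∩ A_jA_s`,
`M = A_iu₁ ∩ A_jA_k`, `N = A_ju₂ ∩ A_iA_s` and `J = A_iM ∩ A_jN = A_iu₁ ∩ A_ju₂`,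
the lines `A_sM`, `A_kN` and `IJ` are concurrent. -/
theorem generalized_sharygin_part2 (A : Fin 4 → PPt) (i j k s : Fin 4)
    (hij : i ≠ j) (hik : i ≠ k) (his : i ≠ s) (hjk : j ≠ k) (hjs : j ≠ s) (hks : k ≠ s)
    (hnc : ∀ p q r : Fin 4, p ≠ q → p ≠ r → q ≠ r → ¬ collin (A p) (A q) (A r))
    (u₁ u₂ I M N J : PPt)
    (hu₁0 : u₁ ≠ 0) (hu₁ : collin (A j) (A s) u₁)
    (hu₂0 : u₂ ≠ 0) (hu₂ : collin (A i) (A k) u₂)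
    (hI : I = pcross (pcross (A i) (A k)) (pcross (A j) (A s)))
    (hM : M = pcross (pcross (A i) u₁) (pcross (A j) (A k)))
    (hN : N = pcross (pcross (A j) u₂) (pcross (A i) (A s)))
    (hJ : J = pcross (pcross (A i) u₁) (pcross (A j) u₂))
    (hI0 : I ≠ 0) (hM0 : M ≠ 0) (hN0 : N ≠ 0) (hJ0 : J ≠ 0)
    (hsM : pcross (A s) M ≠ 0) (hkN : pcross (A k) N ≠ 0) (hIJ : pcross I J ≠ 0) :
    ∃ P : PPt, P ≠ 0 ∧ collin (A s) M P ∧ collin (A k) N P ∧ collin I J P := by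
  -- nondegeneracy of the two base lines
  have hJS : pcross (A j) (A s) ≠ 0 := by
    intro h0
    apply hnc j s i hjs hij.symm his.symm
    rw [collin_iff, h0]
    simp [dotProduct]
  have hIK : pcross (A i) (A k) ≠ 0 := by
    intro h0
    apply hnc i k j hik hij hjk.symm
    rw [collin_iff, h0]
    simp [dotProduct]
  -- decompose u₁, u₂
  obtain ⟨x, y, hx⟩ := decomp (A j) (A s) u₁ hJS ((collin_iff _ _ _).mp hu₁)
  obtain ⟨z, w, hz⟩ := decomp (A i) (A k) u₂ hIK ((collin_iff _ _ _).mp hu₂)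
  -- brackets
  set p : ℝ := pcross (A i) (A j) ⬝ᵥ A k with hp
  set q : ℝ := pcross (A i) (A j) ⬝ᵥ A s with hq
  set r : ℝ := pcross (A i) (A k) ⬝ᵥ A s with hr
  set t : ℝ := pcross (A j) (A k) ⬝ᵥ A s with ht
  -- pointwise decompositions of M, N, I, J
  have hbM : pcross u₁ (A j) ⬝ᵥ A k = y * t := by
    simp only [ht, dotProduct, Fin.sum_univ_three, pcross0, pcross1, pcross2, hx]
    ring
  have hMm : ∀ m, M m = p * x * A j m + p * y * A s m - y * t * A i m := by
    intro m
    rw [hM, pcross_pcross, hbM, ← hp, hx m]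
    ring
  have hbN1 : pcross (A j) (A i) ⬝ᵥ A s = -q := by
    simp only [hq, dotProduct, Fin.sum_univ_three, pcross0, pcross1, pcross2]
    ring
  have hbN2 : pcross u₂ (A i) ⬝ᵥ A s = -(w * r) := by
    simp only [hr, dotProduct, Fin.sum_univ_three, pcross0, pcross1, pcross2, hz]
    ring
  have hNm : ∀ m, N m = w * r * A j m - q * z * A i m - q * w * A k m := by
    intro m
    rw [hN, pcross_pcross, hbN1, hbN2, hz m]
    ring
  have hbI : pcross (A k) (A j) ⬝ᵥ A s = -t := by
    simp only [ht, dotProduct, Fin.sum_univ_three, pcross0, pcross1, pcross2]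
    ring
  have hIm : ∀ m, I m = q * A k m + t * A i m := by
    intro m
    rw [hI, pcross_pcross, hbI, ← hq]
    ring
  have hb1 : pcross (A i) (A j) ⬝ᵥ u₂ = w * p := by
    simp only [hp, dotProduct, Fin.sum_univ_three, pcross0, pcross1, pcross2, hz]
    ring
  have hb2 : pcross u₁ (A j) ⬝ᵥ u₂ = y * (w * t - z * q) := by
    simp only [hq, ht, dotProduct, Fin.sum_univ_three, pcross0, pcross1, pcross2, hx, hz]
    ring
  have hJm : ∀ m, J m = w * p * x * A j m + w * p * y * A s m
      - y * (w * t - z * q) * A i m := by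
    intro m
    rw [hJ, pcross_pcross, hb1, hb2, hx m]
    ring
  -- the four bracket evaluations
  have hAkIJ : pcross (A k) I ⬝ᵥ J = w * p ^ 2 * t * x - w * p * r * t * y := by
    simp only [dotProduct, Fin.sum_univ_three, pcross0, pcross1, pcross2, hIm, hJm,
      hp, hq, hr, ht]
    ring
  have hAsMN : pcross (A s) M ⬝ᵥ N = x * z * p * q ^ 2 - x * w * p * q * t := by
    simp only [dotProduct, Fin.sum_univ_three, pcross0, pcross1, pcross2, hMm, hNm,
      hp, hq, hr, ht]
    ring
  have hNIJ : pcross N I ⬝ᵥ J =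
      x * z * w * p ^ 2 * q ^ 2 - x * w ^ 2 * p ^ 2 * q * t := by
    simp only [dotProduct, Fin.sum_univ_three, pcross0, pcross1, pcross2, hNm, hIm, hJm,
      hp, hq, hr, ht]
    ring
  have hAsMAk : pcross (A s) M ⬝ᵥ A k = x * p * t - y * r * t := by
    simp only [dotProduct, Fin.sum_univ_three, pcross0, pcross1, pcross2, hMm,
      hp, hq, hr, ht]
    ring
  -- the concurrency determinant vanishes
  have hD : pcross (A s) M ⬝ᵥ pcross (pcross (A k) N) (pcross I J) = 0 := by
    have hX : ∀ m, pcross (pcross (A k) N) (pcross I J) m =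
        (pcross (A k) I ⬝ᵥ J) * N m - (pcross N I ⬝ᵥ J) * A k m :=
      fun m => pcross_pcross (A k) N I J m
    rw [dot_comb (pcross (A s) M) N (A k) _ _ _ hX, hAkIJ, hNIJ, hAsMN, hAsMAk]
    ring
  obtain ⟨P, hP0, h1, h2, h3⟩ := concur (pcross (A s) M) (pcross (A k) N) (pcross I J)
    hsM hkN hIJ hD
  exact ⟨P, hP0, (collin_iff _ _ _).mpr h1, (collin_iff _ _ _).mpr h2,
    (collin_iff _ _ _).mpr h3⟩
end
end

section
/- (Pascal's theorem, one direction) If six distinct points A, B', C, A', B, C' lie on a conic in the real projective plane, then the points P = AB' ∩ A'B, Q = B'C ∩ BC', and R = CA' ∩ C'A are collinear. -/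
open Matrix

noncomputable section

set_option maxHeartbeats 2000000
set_option maxRecDepth 8000

/-- The point `p` lies on the conic defined by the quadratic form with matrix `Q`. -/
def OnConic (Q : Matrix (Fin 3) (Fin 3) ℝ) (p : PPt) : Prop := p ⬝ᵥ (Q *ᵥ p) = 0

/-- The Veronese embedding of a point of `ℝP²` into `ℝ⁵`: the vector of the six
degree-two monomials. -/
def ver (p : PPt) : Fin 6 → ℝ := ![p 0 ^ 2, p 1 ^ 2, p 2 ^ 2, p 0 * p 1, p 0 * p 2, p 1 * p 2]

/-- The determinant of the three Pascal intersection points equals the 6×6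
determinant of the Veronese images of the six points (a polynomial identity). -/
theorem pascal_key (a b' c a' b c' : PPt) :
    Matrix.det (Matrix.of ![pcross (pcross a b') (pcross a' b),
      pcross (pcross b' c) (pcross b c'), pcross (pcross c a') (pcross c' a)]) =
    Matrix.det (Matrix.of ![ver a, ver b', ver c, ver a', ver b, ver c']) := by
  simp (config := { maxSteps := 10000000 }) only [pcross, cross_apply, ver,
    Matrix.det_fin_three, Matrix.det_succ_row_zero,
    Fin.sum_univ_succ, Matrix.of_apply, Matrix.cons_val', Matrix.cons_val_zero,
    Matrix.cons_val_one, Matrix.head_cons, Matrix.submatrix_apply,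
    Matrix.cons_val_succ, Matrix.submatrix_submatrix, Function.comp_apply,
    Matrix.det_unique, Fin.default_eq_zero, Finset.univ_unique, Finset.sum_singleton,
    Fin.zero_succAbove, Fin.succ_succAbove_zero, Fin.succ_succAbove_succ,
    Fin.val_succ, Fin.val_zero, pow_succ, pow_zero, Matrix.cons_val_fin_one,
    Matrix.head_fin_const, Matrix.tail_cons, Matrix.cons_val_two]
  ring1

/-- If six points lie on a nondegenerate conic, the 6×6 determinant of their
Veronese images vanishes. -/
theorem verdet (Qm : Matrix (Fin 3) (Fin 3) ℝ)
    (hsymm : Qm.IsSymm) (hdet : Qm.det ≠ 0)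
    (a b' c a' b c' : PPt)
    (ha : OnConic Qm a) (hb' : OnConic Qm b') (hc : OnConic Qm c)
    (ha' : OnConic Qm a') (hb : OnConic Qm b) (hc' : OnConic Qm c') :
    Matrix.det (Matrix.of ![ver a, ver b', ver c, ver a', ver b, ver c']) = 0 := by
  rw [← Matrix.exists_mulVec_eq_zero_iff]
  refine ⟨![Qm 0 0, Qm 1 1, Qm 2 2, Qm 0 1 + Qm 1 0, Qm 0 2 + Qm 2 0, Qm 1 2 + Qm 2 1], ?_, ?_⟩
  · intro h
    apply hdet
    have h0 := congrFun h 0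
    have h1 := congrFun h 1
    have h2 := congrFun h 2
    have h3 := congrFun h 3
    have h4 := congrFun h 4
    have h5 := congrFun h 5
    have s01 : Qm 1 0 = Qm 0 1 := by
      have := congrFun (congrFun hsymm 1) 0; simpa [Matrix.IsSymm, Matrix.transpose_apply] using this.symm
    have s02 : Qm 2 0 = Qm 0 2 := by
      have := congrFun (congrFun hsymm 2) 0; simpa [Matrix.IsSymm, Matrix.transpose_apply] using this.symm
    have s12 : Qm 2 1 = Qm 1 2 := by
      have := congrFun (congrFun hsymm 2) 1; simpa [Matrix.IsSymm, Matrix.transpose_apply] using this.symm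
    simp [show (5:Fin 6) = (4:Fin 5).succ from rfl, show (4:Fin 6) = (3:Fin 5).succ from rfl,
      show (3:Fin 6) = (2:Fin 5).succ from rfl, Matrix.cons_val_succ] at h0 h1 h2 h3 h4 h5
    rw [Matrix.det_fin_three]
    rw [s01, s02, s12] at *
    · have e3 : Qm 0 1 = 0 := by linarith
      have e4 : Qm 0 2 = 0 := by linarith
      have e5 : Qm 1 2 = 0 := by linarith
      rw [h0, h1, h2, e3, e4, e5]; ring
  · funext i
    have key : ∀ p : PPt, OnConic Qm p →
        ver p ⬝ᵥ ![Qm 0 0, Qm 1 1, Qm 2 2, Qm 0 1 + Qm 1 0, Qm 0 2 + Qm 2 0, Qm 1 2 + Qm 2 1] = 0 := by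
      intro p hp
      unfold OnConic at hp
      simp [ver, dotProduct, Matrix.mulVec, Fin.sum_univ_succ] at hp ⊢
      linarith [hp]
    fin_cases i <;>
      simpa [Matrix.mulVec, dotProduct] using
        (by first
          | exact key a ha | exact key b' hb' | exact key c hc
          | exact key a' ha' | exact key b hb | exact key c' hc')

/-- **Pascal's theorem (one direction).** If six pairwise distinct points
`a, b', c, a', b, c'` lie on a conic, then the points `P = ab' ∩ a'b`,
`Q = b'c ∩ bc'` and `R = ca' ∩ c'a` are collinear. -/
theorem pascal (Qm : Matrix (Fin 3) (Fin 3) ℝ)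
    (hsymm : Qm.IsSymm) (hdet : Qm.det ≠ 0)
    (a b' c a' b c' P Q R : PPt)
    (ha : OnConic Qm a) (hb' : OnConic Qm b') (hc : OnConic Qm c)
    (ha' : OnConic Qm a') (hb : OnConic Qm b) (hc' : OnConic Qm c')
    (hdist : List.Pairwise (fun x y => pcross x y ≠ 0) [a, b', c, a', b, c'])
    (hP : P = pcross (pcross a b') (pcross a' b))
    (hQ : Q = pcross (pcross b' c) (pcross b c'))
    (hR : R = pcross (pcross c a') (pcross c' a))
    (hP0 : P ≠ 0) (hQ0 : Q ≠ 0) (hR0 : R ≠ 0) :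
    collin P Q R := by
  subst hP hQ hR
  unfold collin
  rw [pascal_key]
  exact verdet Qm hsymm hdet a b' c a' b c' ha hb' hc ha' hb hc'
end
end

section
/- (Self-polar diagonal triangle) Let P, Q, R, S be four distinct points on a nondegenerate conic k in the real projective plane, no three collinear. Let A = QR ∩ PS, B = RP ∩ QS, C = PQ ∩ RS be the diagonal points. Then the polar line of A with respect to k is the line BC (and likewise the polar of B is CA and the polar of C is AB). -/
open Matrix

noncomputable section

lemma eq_of_dots (p q r : PPt) {u v : PPt} (hd : Matrix.det (Matrix.of ![p,q,r]) ≠ 0)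
    (h1 : p ⬝ᵥ u = p ⬝ᵥ v) (h2 : q ⬝ᵥ u = q ⬝ᵥ v) (h3 : r ⬝ᵥ u = r ⬝ᵥ v) : u = v := by
  have hM : IsUnit (Matrix.of ![p,q,r]).det := isUnit_iff_ne_zero.2 hd
  have h : (Matrix.of ![p,q,r]) *ᵥ u = (Matrix.of ![p,q,r]) *ᵥ v := by
    funext i
    fin_cases i <;>
      simpa [Matrix.mulVec, Matrix.of_apply, dotProduct] using (by assumption : _)
  have h2 := congrArg (fun w => (Matrix.of ![p,q,r])⁻¹ *ᵥ w) h
  simpa only [Matrix.mulVec_mulVec, Matrix.nonsing_inv_mul _ hM, Matrix.one_mulVec] using h2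

lemma sec_ne (Qm : Matrix (Fin 3) (Fin 3) ℝ) (hdet : Qm.det ≠ 0) (x y e : PPt)
    (hd : Matrix.det (Matrix.of ![x,y,e]) ≠ 0)
    (hx : x ⬝ᵥ (Qm *ᵥ x) = 0) (hy : y ⬝ᵥ (Qm *ᵥ y) = 0)
    (hxy : x ⬝ᵥ (Qm *ᵥ y) = 0) (hyx : y ⬝ᵥ (Qm *ᵥ x) = 0) : False := by
  set M := Matrix.of ![x,y,e] with hM
  have E : ∀ i j : Fin 3, (M * Qm * Mᵀ) i j = (![x,y,e] i) ⬝ᵥ (Qm *ᵥ (![x,y,e] j)) := by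
    intro i j
    simp only [Matrix.mul_apply, Matrix.transpose_apply, Fin.sum_univ_three, hM,
      Matrix.of_apply, dotProduct, Matrix.mulVec]
    ring
  have h0 : (M * Qm * Mᵀ).det = 0 := by
    rw [Matrix.det_fin_three]
    simp only [E, Matrix.cons_val_zero, Matrix.cons_val_one, Matrix.head_cons]
    rw [hx, hy, hxy, hyx]
    ring
  have h1 : (M * Qm * Mᵀ).det = M.det * Qm.det * M.det := by
    rw [Matrix.det_mul, Matrix.det_mul, Matrix.det_transpose]
  rw [h1] at h0
  rcases mul_eq_zero.1 h0 with h | h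
  · rcases mul_eq_zero.1 h with h | h
    · exact hd h
    · exact hdet h
  · exact hd h

lemma dot_pcross (x y z : PPt) : x ⬝ᵥ pcross y z = Matrix.det (Matrix.of ![x,y,z]) := by
  simp [pcross, cross_apply, dotProduct, Fin.sum_univ_three, Matrix.det_fin_three]
  ring

lemma dot_pcross_self_left (x y : PPt) : x ⬝ᵥ pcross x y = 0 := by
  simp [pcross, cross_apply, dotProduct, Fin.sum_univ_three]; ring

lemma dot_pcross_self_right (x y : PPt) : x ⬝ᵥ pcross y x = 0 := by
  simp [pcross, cross_apply, dotProduct, Fin.sum_univ_three]; ring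

lemma det_rot (x y z : PPt) :
    Matrix.det (Matrix.of ![y,z,x]) = Matrix.det (Matrix.of ![x,y,z]) := by
  simp [Matrix.det_fin_three]; ring

lemma polar_aux (Qm : Matrix (Fin 3) (Fin 3) ℝ)
    (p q r : PPt) (α β γ D : ℝ) (a b c : PPt)
    (hD : D = Matrix.det (Matrix.of ![p, q, r])) (hDne : D ≠ 0)
    (hα : α ≠ 0)
    (hq : q ⬝ᵥ (Qm *ᵥ q) = 0) (hr : r ⬝ᵥ (Qm *ᵥ r) = 0)
    (hsymB : r ⬝ᵥ (Qm *ᵥ q) = q ⬝ᵥ (Qm *ᵥ r))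
    (hcond : α*β*(p ⬝ᵥ (Qm *ᵥ q)) + α*γ*(p ⬝ᵥ (Qm *ᵥ r)) + β*γ*(q ⬝ᵥ (Qm *ᵥ r)) = 0)
    (hne : q ⬝ᵥ (Qm *ᵥ r) ≠ 0)
    (ha : ∀ j, a j = -(D*β)*q j - (D*γ)*r j)
    (hb : ∀ j, b j = -(D*α)*p j - (D*γ)*r j)
    (hc : ∀ j, c j = -(D*α)*p j - (D*β)*q j) :
    ∃ t : ℝ, t ≠ 0 ∧ Qm *ᵥ a = t • pcross b c := by
  have hpa : p ⬝ᵥ (Qm *ᵥ a)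
      = -(D*β)*(p ⬝ᵥ (Qm *ᵥ q)) - (D*γ)*(p ⬝ᵥ (Qm *ᵥ r)) := by
    simp only [dotProduct, Matrix.mulVec, Fin.sum_univ_three, ha]; ring
  have hqa : q ⬝ᵥ (Qm *ᵥ a)
      = -(D*β)*(q ⬝ᵥ (Qm *ᵥ q)) - (D*γ)*(q ⬝ᵥ (Qm *ᵥ r)) := by
    simp only [dotProduct, Matrix.mulVec, Fin.sum_univ_three, ha]; ring
  have hra : r ⬝ᵥ (Qm *ᵥ a)
      = -(D*β)*(r ⬝ᵥ (Qm *ᵥ q)) - (D*γ)*(r ⬝ᵥ (Qm *ᵥ r)) := by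
    simp only [dotProduct, Matrix.mulVec, Fin.sum_univ_three, ha]; ring
  have hbc : pcross b c = (D^2*(α*β)) • pcross p q + (D^2*(α*γ)) • pcross r p
      + (-(D^2*(β*γ))) • pcross q r := by
    funext j
    fin_cases j <;>
      · simp [pcross, cross_apply, hb, hc]
        ring
  have hdetqr : p ⬝ᵥ pcross q r = D := by rw [dot_pcross, ← hD]
  have hdetrp : q ⬝ᵥ pcross r p = D := by rw [dot_pcross, det_rot p q r, ← hD]
  have hdetpq : r ⬝ᵥ pcross p q = D := by
    rw [dot_pcross, det_rot q r p, det_rot p q r, ← hD]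
  have hpbc : p ⬝ᵥ pcross b c = -(β*γ*D^2)*D := by
    rw [hbc]
    simp only [dotProduct_add, dotProduct_smul, smul_eq_mul,
      dot_pcross_self_left, dot_pcross_self_right, hdetqr]
    ring
  have hqbc : q ⬝ᵥ pcross b c = (α*γ*D^2)*D := by
    rw [hbc]
    simp only [dotProduct_add, dotProduct_smul, smul_eq_mul,
      dot_pcross_self_left, dot_pcross_self_right, hdetrp]
    ring
  have hrbc : r ⬝ᵥ pcross b c = (α*β*D^2)*D := by
    rw [hbc]
    simp only [dotProduct_add, dotProduct_smul, smul_eq_mul,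
      dot_pcross_self_left, dot_pcross_self_right, hdetpq]
    ring
  refine ⟨-(q ⬝ᵥ (Qm *ᵥ r)) / (α * D^2),
    div_ne_zero (neg_ne_zero.2 hne) (mul_ne_zero hα (pow_ne_zero 2 hDne)), ?_⟩
  have claim : (α * D^2) • (Qm *ᵥ a) = (-(q ⬝ᵥ (Qm *ᵥ r))) • pcross b c := by
    apply eq_of_dots p q r (by rw [← hD]; exact hDne)
    · rw [dotProduct_smul, dotProduct_smul, smul_eq_mul, smul_eq_mul, hpa, hpbc]
      linear_combination (-(D^3)) * hcond
    · rw [dotProduct_smul, dotProduct_smul, smul_eq_mul, smul_eq_mul, hqa, hqbc]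
      linear_combination (-(α*β*D^3)) * hq
    · rw [dotProduct_smul, dotProduct_smul, smul_eq_mul, smul_eq_mul, hra, hrbc]
      linear_combination (-(α*γ*D^3)) * hr + (-(α*β*D^3)) * hsymB
  have hne2 : (α * D^2) ≠ 0 := mul_ne_zero hα (pow_ne_zero 2 hDne)
  have h2 := congrArg (fun w => (α * D^2)⁻¹ • w) claim
  simp only [smul_smul, inv_mul_cancel₀ hne2, one_smul] at h2
  rw [h2, div_eq_inv_mul]

/-- **Self-polar diagonal triangle.** If `p, q, r, s` are four points on a
nondegenerate conic, no three collinear, and `a = qr ∩ ps`, `b = rp ∩ qs`,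
`c = pq ∩ rs` are the diagonal points of the quadrangle, then the polar of `a`
is the line `bc`, the polar of `b` is `ca`, and the polar of `c` is `ab`. -/
theorem diagonal_triangle_self_polar (Qm : Matrix (Fin 3) (Fin 3) ℝ)
    (hsymm : Qm.IsSymm) (hdet : Qm.det ≠ 0)
    (p q r s a b c : PPt)
    (hp : OnConic Qm p) (hq : OnConic Qm q) (hr : OnConic Qm r) (hs : OnConic Qm s)
    (hpqr : ¬ collin p q r) (hpqs : ¬ collin p q s)
    (hprs : ¬ collin p r s) (hqrs : ¬ collin q r s)
    (ha : a = pcross (pcross q r) (pcross p s))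
    (hb : b = pcross (pcross r p) (pcross q s))
    (hc : c = pcross (pcross p q) (pcross r s)) :
    (∃ t : ℝ, t ≠ 0 ∧ Qm *ᵥ a = t • pcross b c) ∧
    (∃ t : ℝ, t ≠ 0 ∧ Qm *ᵥ b = t • pcross c a) ∧
    (∃ t : ℝ, t ≠ 0 ∧ Qm *ᵥ c = t • pcross a b) := by
  have hDet : Matrix.det (Matrix.of ![p,q,r]) ≠ 0 := hpqr
  set v : PPt := s ᵥ* (Matrix.of ![p,q,r])⁻¹ with hvdef
  have hv : v ᵥ* (Matrix.of ![p,q,r]) = s := by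
    rw [hvdef, Matrix.vecMul_vecMul, Matrix.nonsing_inv_mul _ (isUnit_iff_ne_zero.2 hDet),
      Matrix.vecMul_one]
  have hs' : ∀ j, s j = v 0 * p j + v 1 * q j + v 2 * r j := by
    intro j
    conv_lhs => rw [← hv]
    simp [Matrix.vecMul, dotProduct, Fin.sum_univ_three]
  have e10 : Qm 1 0 = Qm 0 1 := hsymm.apply 0 1
  have e20 : Qm 2 0 = Qm 0 2 := hsymm.apply 0 2
  have e21 : Qm 2 1 = Qm 1 2 := hsymm.apply 1 2
  have hQsym : ∀ x y : PPt, x ⬝ᵥ (Qm *ᵥ y) = y ⬝ᵥ (Qm *ᵥ x) := by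
    intro x y
    simp only [dotProduct, Matrix.mulVec, Fin.sum_univ_three]
    rw [e10, e20, e21]; ring
  have hp' : p ⬝ᵥ (Qm *ᵥ p) = 0 := hp
  have hq' : q ⬝ᵥ (Qm *ᵥ q) = 0 := hq
  have hr' : r ⬝ᵥ (Qm *ᵥ r) = 0 := hr
  have hs0 : s ⬝ᵥ (Qm *ᵥ s) = 0 := hs
  have hcond : v 0 * v 1 * (p ⬝ᵥ (Qm *ᵥ q)) + v 0 * v 2 * (p ⬝ᵥ (Qm *ᵥ r))
      + v 1 * v 2 * (q ⬝ᵥ (Qm *ᵥ r)) = 0 := by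
    have hp2 := hp'; have hq2 := hq'; have hr2 := hr'
    simp only [dotProduct, Matrix.mulVec, Fin.sum_univ_three, hs'] at hp2 hq2 hr2 hs0 ⊢
    rw [e10, e20, e21] at hp2 hq2 hr2 hs0 ⊢
    linear_combination (1/2)*hs0 - (v 0^2/2)*hp2 - (v 1^2/2)*hq2 - (v 2^2/2)*hr2
  have hα : v 0 ≠ 0 := by
    intro h0
    apply hqrs
    show Matrix.det (Matrix.of ![q,r,s]) = 0
    simp only [Matrix.det_fin_three, Matrix.of_apply, Matrix.cons_val', Matrix.cons_val_zero,
      Matrix.cons_val_one, Matrix.head_cons, Matrix.cons_val_two, Matrix.tail_cons,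
      Matrix.empty_val', Matrix.cons_val_fin_one, Matrix.head_fin_const, hs', h0]
    ring
  have hβ : v 1 ≠ 0 := by
    intro h0
    apply hprs
    show Matrix.det (Matrix.of ![p,r,s]) = 0
    simp only [Matrix.det_fin_three, Matrix.of_apply, Matrix.cons_val', Matrix.cons_val_zero,
      Matrix.cons_val_one, Matrix.head_cons, Matrix.cons_val_two, Matrix.tail_cons,
      Matrix.empty_val', Matrix.cons_val_fin_one, Matrix.head_fin_const, hs', h0]
    ring
  have hγ : v 2 ≠ 0 := by
    intro h0
    apply hpqs
    show Matrix.det (Matrix.of ![p,q,s]) = 0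
    simp only [Matrix.det_fin_three, Matrix.of_apply, Matrix.cons_val', Matrix.cons_val_zero,
      Matrix.cons_val_one, Matrix.head_cons, Matrix.cons_val_two, Matrix.tail_cons,
      Matrix.empty_val', Matrix.cons_val_fin_one, Matrix.head_fin_const, hs', h0]
    ring
  -- nonzero pairings
  have hdet_qrp : Matrix.det (Matrix.of ![q,r,p]) ≠ 0 := by
    rw [det_rot p q r]; exact hDet
  have hdet_rpq : Matrix.det (Matrix.of ![r,p,q]) ≠ 0 := by
    rw [det_rot q r p, det_rot p q r]; exact hDet
  have hqr_ne : q ⬝ᵥ (Qm *ᵥ r) ≠ 0 := fun h0 =>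
    sec_ne Qm hdet q r p hdet_qrp hq' hr' h0 (by rw [hQsym r q]; exact h0)
  have hrp_ne : r ⬝ᵥ (Qm *ᵥ p) ≠ 0 := fun h0 =>
    sec_ne Qm hdet r p q hdet_rpq hr' hp' h0 (by rw [hQsym p r]; exact h0)
  have hpq_ne : p ⬝ᵥ (Qm *ᵥ q) ≠ 0 := fun h0 =>
    sec_ne Qm hdet p q r hDet hp' hq' h0 (by rw [hQsym q p]; exact h0)
  -- diagonal point coordinates
  set D : ℝ := Matrix.det (Matrix.of ![p,q,r]) with hD
  have ha' : ∀ j, a j = -(D * v 1) * q j - (D * v 2) * r j := by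
    intro j
    rw [hD]
    fin_cases j <;>
      · simp [ha, pcross, cross_apply, hs', Matrix.det_fin_three]
        ring
  have hb' : ∀ j, b j = -(D * v 0) * p j - (D * v 2) * r j := by
    intro j
    rw [hD]
    fin_cases j <;>
      · simp [hb, pcross, cross_apply, hs', Matrix.det_fin_three]
        ring
  have hc' : ∀ j, c j = -(D * v 0) * p j - (D * v 1) * q j := by
    intro j
    rw [hD]
    fin_cases j <;>
      · simp [hc, pcross, cross_apply, hs', Matrix.det_fin_three]
        ring
  refine ⟨?_, ?_, ?_⟩
  · exact polar_aux Qm p q r (v 0) (v 1) (v 2) D a b c hD hDet hα hq' hr'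
      (hQsym r q) hcond hqr_ne ha' hb' hc'
  · refine polar_aux Qm q r p (v 1) (v 2) (v 0) D b c a ?_ hDet hβ hr' hp'
      (hQsym p r) ?_ hrp_ne ?_ ?_ ?_
    · rw [hD, det_rot p q r]
    · rw [hQsym q p, hQsym r p]
      linear_combination hcond
    · intro j; rw [hb' j]; try ring
    · intro j; rw [hc' j]; try ring
    · intro j; rw [ha' j]; try ring
  · refine polar_aux Qm r p q (v 2) (v 0) (v 1) D c a b ?_ hDet hγ hp' hq'
      (hQsym q p) ?_ hpq_ne ?_ ?_ ?_
    · rw [hD, det_rot q r p, det_rot p q r]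
    · rw [hQsym r p, hQsym r q]
      linear_combination hcond
    · intro j; rw [hc' j]; try ring
    · intro j; rw [ha' j]; try ring
    · intro j; rw [hb' j]; try ring
end
end

section
/- Let (A₁A₂A₃A₄, g) be a (q,l)-pair and let k_ij be the Sharygin conic through A_i, A_j and the four Sharygin points M_ij^k, M_ij^s, M_ji^k, M_ji^s associated with the vertices A_i, A_j. Then the pole of the line g with respect to k_ij is the point G_ij = A_iA_j ∩ M_ij^k M_ij^s. -/
open Matrix

noncomputable section

/-- No three of the four vertices are collinear (in particular all are nonzero). -/
def Nondeg4 (A : Fin 4 → PPt) : Prop :=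
  ∀ p q r : Fin 4, p ≠ q → p ≠ r → q ≠ r → ¬ collin (A p) (A q) (A r)

/-- `(A, g)` is a (q,l)-pair: a complete quadrangle `A 0, A 1, A 2, A 3` (no three
vertices collinear) together with a line `g` not incident with any vertex and not
incident with any of the three diagonal points. -/
def QLPair (A : Fin 4 → PPt) (g : PPt) : Prop :=
  g ≠ 0 ∧ Nondeg4 A ∧ (∀ p : Fin 4, A p ⬝ᵥ g ≠ 0) ∧
    (pcross (pcross (A 0) (A 1)) (pcross (A 2) (A 3))) ⬝ᵥ g ≠ 0 ∧
    (pcross (pcross (A 0) (A 2)) (pcross (A 1) (A 3))) ⬝ᵥ g ≠ 0 ∧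
    (pcross (pcross (A 0) (A 3)) (pcross (A 1) (A 2))) ⬝ᵥ g ≠ 0

/-- `U A g p q` is the point `U_pq = g ∩ A_pA_q`. -/
def U (A : Fin 4 → PPt) (g : PPt) (p q : Fin 4) : PPt :=
  pcross (pcross (A p) (A q)) g

section SharyginHelpers

lemma pc0 (x y : PPt) : pcross x y 0 = x 1 * y 2 - x 2 * y 1 := by simp [pcross, cross_apply]
lemma pc1 (x y : PPt) : pcross x y 1 = x 2 * y 0 - x 0 * y 2 := by simp [pcross, cross_apply]
lemma pc2 (x y : PPt) : pcross x y 2 = x 0 * y 1 - x 1 * y 0 := by simp [pcross, cross_apply]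

lemma vec_ext (x y : PPt) (h0 : x 0 = y 0) (h1 : x 1 = y 1) (h2 : x 2 = y 2) : x = y := by
  funext n
  fin_cases n
  · exact h0
  · exact h1
  · exact h2

lemma dot3 (x y : PPt) : x ⬝ᵥ y = x 0 * y 0 + x 1 * y 1 + x 2 * y 2 := by
  simp [dotProduct, Fin.sum_univ_three]

lemma mv0 (Qm : Matrix (Fin 3) (Fin 3) ℝ) (x : PPt) :
    (Qm *ᵥ x) 0 = Qm 0 0 * x 0 + Qm 0 1 * x 1 + Qm 0 2 * x 2 := by
  simp [Matrix.mulVec, dotProduct, Fin.sum_univ_three]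
lemma mv1 (Qm : Matrix (Fin 3) (Fin 3) ℝ) (x : PPt) :
    (Qm *ᵥ x) 1 = Qm 1 0 * x 0 + Qm 1 1 * x 1 + Qm 1 2 * x 2 := by
  simp [Matrix.mulVec, dotProduct, Fin.sum_univ_three]
lemma mv2 (Qm : Matrix (Fin 3) (Fin 3) ℝ) (x : PPt) :
    (Qm *ᵥ x) 2 = Qm 2 0 * x 0 + Qm 2 1 * x 1 + Qm 2 2 * x 2 := by
  simp [Matrix.mulVec, dotProduct, Fin.sum_univ_three]

lemma det_eq_triple (x y z : PPt) : Matrix.det (Matrix.of ![x, y, z]) = x ⬝ᵥ pcross y z := by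
  rw [Matrix.det_fin_three]
  simp [pcross, cross_apply, dotProduct, Fin.sum_univ_three]
  ring

/-- `x × ((x × y) × z) = (x ⬝ z) • (x × y)` -/
lemma LV1 (x y z : PPt) : pcross x (pcross (pcross x y) z) = (x ⬝ᵥ z) • pcross x y := by
  refine vec_ext _ _ ?_ ?_ ?_ <;>
    simp only [Pi.smul_apply, smul_eq_mul, pc0, pc1, pc2, dot3] <;> ring

/-- `x × (y × (x × z)) = -(x ⬝ y) • (x × z)` -/
lemma LV2 (x y z : PPt) : pcross x (pcross y (pcross x z)) = (-(x ⬝ᵥ y)) • pcross x z := by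
  refine vec_ext _ _ ?_ ?_ ?_ <;>
    simp only [Pi.smul_apply, smul_eq_mul, pc0, pc1, pc2, dot3] <;> ring

/-- `(x × (L × g)) × L = (x ⬝ L) • (L × g)` -/
lemma LV3 (x L g : PPt) :
    pcross (pcross x (pcross L g)) L = (x ⬝ᵥ L) • pcross L g := by
  refine vec_ext _ _ ?_ ?_ ?_ <;>
    simp only [Pi.smul_apply, smul_eq_mul, pc0, pc1, pc2, dot3] <;> ring

/-- `x ⬝ (y × ((x × z) × g)) = (x ⬝ g) * (x ⬝ (y × z))` -/
lemma LI1 (x y z g : PPt) :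
    x ⬝ᵥ pcross y (pcross (pcross x z) g) = (x ⬝ᵥ g) * (x ⬝ᵥ pcross y z) := by
  simp only [pc0, pc1, pc2, dot3]; ring

/-- `(L × g) × (M × g) = ((L × M) ⬝ g) • g` -/
lemma LV4 (L M g : PPt) :
    pcross (pcross L g) (pcross M g) = ((pcross L M) ⬝ᵥ g) • g := by
  refine vec_ext _ _ ?_ ?_ ?_ <;>
    simp only [Pi.smul_apply, smul_eq_mul, pc0, pc1, pc2, dot3] <;> ring

/-- `(x × y) × (x × z) = (x ⬝ (y × z)) • x` -/
lemma LV5 (x y z : PPt) :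
    pcross (pcross x y) (pcross x z) = (x ⬝ᵥ pcross y z) • x := by
  refine vec_ext _ _ ?_ ?_ ?_ <;>
    simp only [Pi.smul_apply, smul_eq_mul, pc0, pc1, pc2, dot3] <;> ring

/-- `v × (x × y) = (v ⬝ y) • x - (v ⬝ x) • y` -/
lemma Ltri (v x y : PPt) :
    pcross v (pcross x y) = (v ⬝ᵥ y) • x - (v ⬝ᵥ x) • y := by
  refine vec_ext _ _ ?_ ?_ ?_ <;>
    simp only [Pi.smul_apply, Pi.sub_apply, smul_eq_mul, pc0, pc1, pc2, dot3] <;> ring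

lemma pcross_smul_left (t : ℝ) (x y : PPt) : pcross (t • x) y = t • pcross x y := by
  refine vec_ext _ _ ?_ ?_ ?_ <;>
    simp only [Pi.smul_apply, smul_eq_mul, pc0, pc1, pc2] <;> ring

lemma pcross_smul_right (t : ℝ) (x y : PPt) : pcross x (t • y) = t • pcross x y := by
  refine vec_ext _ _ ?_ ?_ ?_ <;>
    simp only [Pi.smul_apply, smul_eq_mul, pc0, pc1, pc2] <;> ring

lemma pcross_anticomm' (x y : PPt) : pcross x y = -pcross y x := by
  refine vec_ext _ _ ?_ ?_ ?_ <;>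
    simp only [Pi.neg_apply, pc0, pc1, pc2] <;> ring

lemma pcross_neg_right (x y : PPt) : pcross x (-y) = -pcross x y := by
  refine vec_ext _ _ ?_ ?_ ?_ <;>
    simp only [Pi.neg_apply, pc0, pc1, pc2] <;> ring

lemma smul_dot3 (c : ℝ) (v w : PPt) : (c • v) ⬝ᵥ w = c * (v ⬝ᵥ w) := by
  rw [smul_dotProduct]; rfl

lemma exists_smul_of_cross_zero (v g : PPt) (hg : g ≠ 0) (h : pcross v g = 0) :
    ∃ t : ℝ, v = t • g := by
  have h0 : v 1 * g 2 - v 2 * g 1 = 0 := by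
    have := congrFun h 0; rwa [pc0] at this
  have h1 : v 2 * g 0 - v 0 * g 2 = 0 := by
    have := congrFun h 1; rwa [pc1] at this
  have h2 : v 0 * g 1 - v 1 * g 0 = 0 := by
    have := congrFun h 2; rwa [pc2] at this
  have hcases : g 0 ≠ 0 ∨ g 1 ≠ 0 ∨ g 2 ≠ 0 := by
    by_contra hc
    push_neg at hc
    exact hg (vec_ext g 0 (by simpa using hc.1) (by simpa using hc.2.1)
      (by simpa using hc.2.2))
  rcases hcases with hgz | hgz | hgz
  · refine ⟨v 0 / g 0, vec_ext _ _ ?_ ?_ ?_⟩ <;>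
      simp only [Pi.smul_apply, smul_eq_mul, div_mul_eq_mul_div]
    · rw [eq_div_iff hgz]
    · rw [eq_div_iff hgz]; linear_combination -h2
    · rw [eq_div_iff hgz]; linear_combination h1
  · refine ⟨v 1 / g 1, vec_ext _ _ ?_ ?_ ?_⟩ <;>
      simp only [Pi.smul_apply, smul_eq_mul, div_mul_eq_mul_div]
    · rw [eq_div_iff hgz]; linear_combination h2
    · rw [eq_div_iff hgz]
    · rw [eq_div_iff hgz]; linear_combination -h0
  · refine ⟨v 2 / g 2, vec_ext _ _ ?_ ?_ ?_⟩ <;>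
      simp only [Pi.smul_apply, smul_eq_mul, div_mul_eq_mul_div]
    · rw [eq_div_iff hgz]; linear_combination -h1
    · rw [eq_div_iff hgz]; linear_combination h0
    · rw [eq_div_iff hgz]

/-- Core lemma: for four points on a symmetric conic, the diagonal point
`G = (a∨b) ∧ (p∨q)` is conjugate to the diagonal point `X = (a∨p) ∧ (b∨q)`. -/
lemma core_conjugate (Qm : Matrix (Fin 3) (Fin 3) ℝ) (hsymm : Qm.IsSymm) (a b p q : PPt)
    (ha : a ⬝ᵥ (Qm *ᵥ a) = 0) (hb : b ⬝ᵥ (Qm *ᵥ b) = 0)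
    (hp : p ⬝ᵥ (Qm *ᵥ p) = 0) (hq : q ⬝ᵥ (Qm *ᵥ q) = 0) :
    (pcross (pcross a p) (pcross b q)) ⬝ᵥ (Qm *ᵥ (pcross (pcross a b) (pcross p q))) = 0 := by
  have e10 : Qm 1 0 = Qm 0 1 := hsymm.apply 0 1
  have e20 : Qm 2 0 = Qm 0 2 := hsymm.apply 0 2
  have e21 : Qm 2 1 = Qm 1 2 := hsymm.apply 1 2
  simp only [dot3, mv0, mv1, mv2, pc0, pc1, pc2] at ha hb hp hq ⊢
  rw [e10, e20, e21] at ha hb hp hq ⊢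
  linear_combination (-(1/2) * (b 0 * (p 1 * q 2 - p 2 * q 1) + b 1 * (p 2 * q 0 - p 0 * q 2) + b 2 * (p 0 * q 1 - p 1 * q 0))^2) * ha + ((1/2) * (a 0 * (p 1 * q 2 - p 2 * q 1) + a 1 * (p 2 * q 0 - p 0 * q 2) + a 2 * (p 0 * q 1 - p 1 * q 0))^2) * hb + ((1/2) * (a 0 * (b 1 * q 2 - b 2 * q 1) + a 1 * (b 2 * q 0 - b 0 * q 2) + a 2 * (b 0 * q 1 - b 1 * q 0))^2) * hp + (-(1/2) * (a 0 * (b 1 * p 2 - b 2 * p 1) + a 1 * (b 2 * p 0 - b 0 * p 2) + a 2 * (b 0 * p 1 - b 1 * p 0))^2) * hq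

end SharyginHelpers

/-- **Proposition 3.** For a (q,l)-pair `(A, g)`, the pole of the line `g` with
respect to the (nondegenerate) Sharygin conic `k_ij` through `A_i`, `A_j` and the
four Sharygin points is the point `G_ij = A_iA_j ∩ M_ij^k M_ij^s`. -/
theorem Gij_pole_of_g (A : Fin 4 → PPt) (g : PPt) (i j k s : Fin 4)
    (hij : i ≠ j) (hik : i ≠ k) (his : i ≠ s) (hjk : j ≠ k) (hjs : j ≠ s) (hks : k ≠ s)
    (hql : QLPair A g)
    (Mijk Mjis Mijs Mjik G : PPt)
    (hMijk : Mijk = pcross (pcross (A i) (U A g j s)) (pcross (A j) (A k)))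
    (hMjis : Mjis = pcross (pcross (A j) (U A g i k)) (pcross (A i) (A s)))
    (hMijs : Mijs = pcross (pcross (A i) (U A g j k)) (pcross (A j) (A s)))
    (hMjik : Mjik = pcross (pcross (A j) (U A g i s)) (pcross (A i) (A k)))
    (Qm : Matrix (Fin 3) (Fin 3) ℝ) (hsymm : Qm.IsSymm) (hdet : Qm.det ≠ 0)
    (hAi : OnConic Qm (A i)) (hAj : OnConic Qm (A j))
    (h1 : OnConic Qm Mijk) (h2 : OnConic Qm Mjis)
    (h3 : OnConic Qm Mijs) (h4 : OnConic Qm Mjik)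
    (hG : G = pcross (pcross (A i) (A j)) (pcross Mijk Mijs))
    (hG0 : G ≠ 0) :
    ∃ t : ℝ, t ≠ 0 ∧ Qm *ᵥ G = t • g := by

  obtain ⟨hg0, hnd, hvg, -, -, -⟩ := hql
  -- abbreviations
  have hbg : A j ⬝ᵥ g ≠ 0 := hvg j
  have tri_ne : ∀ p q r : Fin 4, p ≠ q → p ≠ r → q ≠ r → A p ⬝ᵥ pcross (A q) (A r) ≠ 0 := by
    intro p q r h1 h2 h3 hz
    exact hnd p q r h1 h2 h3 (by rw [collin, det_eq_triple]; exact hz)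
  have habk : A i ⬝ᵥ pcross (A j) (A k) ≠ 0 := tri_ne i j k hij hik hjk
  have habs : A i ⬝ᵥ pcross (A j) (A s) ≠ 0 := tri_ne i j s hij his hjs
  have hbac : A j ⬝ᵥ pcross (A i) (A k) ≠ 0 := tri_ne j i k (Ne.symm hij) hjk hik
  have hbad : A j ⬝ᵥ pcross (A i) (A s) ≠ 0 := tri_ne j i s (Ne.symm hij) hjs his
  have hbdc : A j ⬝ᵥ pcross (A s) (A k) ≠ 0 := tri_ne j s k hjs hjk (Ne.symm hks)
  -- notation for this proof
  set a := A i with ha_def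
  set b := A j with hb_def
  set c := A k with hc_def
  set d := A s with hd_def
  set m : PPt := pcross b c with hm_def    -- line A_jA_k
  set m' : PPt := pcross b d with hm'_def  -- line A_jA_s
  set u : PPt := pcross m' g with hu_def   -- U_js
  set u' : PPt := pcross m g with hu'_def  -- U_jk
  have hUjs : U A g j s = u := rfl
  have hUjk : U A g j k = u' := rfl
  have hMijk' : Mijk = pcross (pcross a u) m := by rw [hMijk, hUjs]
  have hMijs' : Mijs = pcross (pcross a u') m' := by rw [hMijs, hUjk]
  -- first conjugation: u ⬝ Qm G = 0
  have key1 : u ⬝ᵥ (Qm *ᵥ G) = 0 := by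
    have hX := core_conjugate Qm hsymm a b Mijk Mijs hAi hAj h1 h3
    rw [← hG] at hX
    have hXu : pcross (pcross a Mijk) (pcross b Mijs)
        = ((a ⬝ᵥ m) * (-((b ⬝ᵥ g) * (b ⬝ᵥ pcross a c))) * (a ⬝ᵥ m')) • u := by
      rw [hMijk', hMijs']
      rw [show pcross a (pcross (pcross a u) m) = (a ⬝ᵥ m) • pcross a u from LV1 a u m]
      rw [show pcross b (pcross (pcross a u') m') = (-(b ⬝ᵥ pcross a u')) • m' from by
        rw [hm'_def]; exact LV2 b (pcross a u') d]
      rw [pcross_smul_left, pcross_smul_right, hu'_def, hm_def, LI1 b a c g]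
      rw [show pcross (pcross a u) m' = (a ⬝ᵥ m') • u from by
        rw [hu_def]; exact LV3 a m' g]
      simp only [smul_smul]
      congr 1
      ring
    rw [hXu, smul_dot3] at hX
    rcases mul_eq_zero.mp hX with hc0 | h
    · exact absurd hc0 (by
        apply mul_ne_zero (mul_ne_zero habk _) habs
        exact neg_ne_zero.mpr (mul_ne_zero hbg hbac))
    · exact h
  -- second conjugation: u' ⬝ Qm G = 0
  have key2 : u' ⬝ᵥ (Qm *ᵥ G) = 0 := by
    have hY := core_conjugate Qm hsymm a b Mijs Mijk hAi hAj h3 h1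
    have hGneg : pcross (pcross a b) (pcross Mijs Mijk) = -G := by
      rw [hG, pcross_anticomm' Mijs Mijk, pcross_neg_right]
    rw [hGneg, Matrix.mulVec_neg, dotProduct_neg, neg_eq_zero] at hY
    have hYu : pcross (pcross a Mijs) (pcross b Mijk)
        = ((a ⬝ᵥ m') * (-((b ⬝ᵥ g) * (b ⬝ᵥ pcross a d))) * (a ⬝ᵥ m)) • u' := by
      rw [hMijk', hMijs']
      rw [show pcross a (pcross (pcross a u') m') = (a ⬝ᵥ m') • pcross a u' from LV1 a u' m']
      rw [show pcross b (pcross (pcross a u) m) = (-(b ⬝ᵥ pcross a u)) • m from by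
        rw [hm_def]; exact LV2 b (pcross a u) c]
      rw [pcross_smul_left, pcross_smul_right, hu_def, hm'_def, LI1 b a d g]
      rw [show pcross (pcross a u') m = (a ⬝ᵥ m) • u' from by
        rw [hu'_def]; exact LV3 a m g]
      simp only [smul_smul]
      congr 1
      ring
    rw [hYu, smul_dot3] at hY
    rcases mul_eq_zero.mp hY with hc0 | h
    · exact absurd hc0 (by
        apply mul_ne_zero (mul_ne_zero habs _) habk
        exact neg_ne_zero.mpr (mul_ne_zero hbg hbad))
    · exact h
  -- the polar direction
  set v : PPt := Qm *ᵥ G with hv_def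
  have hvu : v ⬝ᵥ u = 0 := by rw [dotProduct_comm]; exact key1
  have hvu' : v ⬝ᵥ u' = 0 := by rw [dotProduct_comm]; exact key2
  have hcross0 : pcross v (pcross u u') = 0 := by
    rw [Ltri, hvu, hvu', zero_smul, zero_smul, sub_zero]
  have huu' : pcross u u' = ((b ⬝ᵥ pcross d c) * (b ⬝ᵥ g)) • g := by
    rw [hu_def, hu'_def, LV4 m' m g, hm'_def, hm_def, LV5 b d c, smul_dot3]
  have hvg0 : pcross v g = 0 := by
    rw [huu', pcross_smul_right] at hcross0
    have hne : (b ⬝ᵥ pcross d c) * (b ⬝ᵥ g) ≠ 0 := mul_ne_zero hbdc hbg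
    exact (smul_eq_zero.mp hcross0).resolve_left hne
  have hvne : v ≠ 0 := by
    intro hz
    apply hG0
    have h1 := congrArg (fun w => Qm⁻¹ *ᵥ w) (hv_def.symm.trans hz)
    simpa [Matrix.mulVec_mulVec, Matrix.nonsing_inv_mul Qm (isUnit_iff_ne_zero.mpr hdet)]
      using h1
  obtain ⟨t, ht⟩ := exists_smul_of_cross_zero v g hg0 hvg0
  refine ⟨t, ?_, ht⟩
  intro ht0
  exact hvne (by rw [ht, ht0, zero_smul])
end
end

section
/- Let (A₁A₂A₃A₄, g) be a (q,l)-pair, and for each pair of indices p ≠ q let G_pq be the G-point on A_pA_q (the harmonic conjugate of U_pq = g ∩ A_pA_q with respect to A_p, A_q). Then for any three distinct indices i, j, s, the line G_ij G_js passes through the point U_is = g ∩ A_iA_s. -/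
open Matrix

noncomputable section

/-- `x` and `y` are harmonic conjugates with respect to `a` and `b`: writing
`x = α • a + β • b` and `y = γ • a + δ • b`, the cross-ratio `(a, b; x, y)` is `-1`,
i.e. `α * δ + β * γ = 0`. -/
def HarmonicConj (a b x y : PPt) : Prop :=
  ∃ α β γ δ : ℝ, (α, β) ≠ (0, 0) ∧ (γ, δ) ≠ (0, 0) ∧
    x = α • a + β • b ∧ y = γ • a + δ • b ∧ α * δ + β * γ = 0


lemma U_formula (x y g : PPt) : pcross (pcross x y) g = (x ⬝ᵥ g) • y - (y ⬝ᵥ g) • x := by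
  funext k
  fin_cases k <;>
    simp [pcross, crossProduct, dotProduct, Fin.sum_univ_three] <;> ring

lemma indep' {a b c : PPt} (h : ¬ collin a b c) {x y : ℝ}
    (e0 : x * a 0 + y * b 0 = 0) (e1 : x * a 1 + y * b 1 = 0)
    (e2 : x * a 2 + y * b 2 = 0) : x = 0 ∧ y = 0 := by
  rw [collin, Matrix.det_fin_three] at h
  simp only [Matrix.of_apply, Matrix.cons_val', Matrix.cons_val_zero, Matrix.cons_val_one,
    Matrix.head_cons, Matrix.empty_val', Matrix.cons_val_fin_one, Matrix.head_fin_const,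
    Matrix.cons_val_two, Matrix.tail_cons] at h
  constructor
  · have hx : x * (a 0 * b 1 * c 2 - a 0 * b 2 * c 1 - a 1 * b 0 * c 2 + a 1 * b 2 * c 0 +
        a 2 * b 0 * c 1 - a 2 * b 1 * c 0) = 0 := by
      linear_combination (b 1 * c 2 - b 2 * c 1) * e0 + (b 2 * c 0 - b 0 * c 2) * e1 +
        (b 0 * c 1 - b 1 * c 0) * e2
    rcases mul_eq_zero.mp hx with h' | h'
    · exact h'
    · exact absurd h' h
  · have hy : y * (a 0 * b 1 * c 2 - a 0 * b 2 * c 1 - a 1 * b 0 * c 2 + a 1 * b 2 * c 0 +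
        a 2 * b 0 * c 1 - a 2 * b 1 * c 0) = 0 := by
      linear_combination (a 2 * c 1 - a 1 * c 2) * e0 + (a 0 * c 2 - a 2 * c 0) * e1 +
        (a 1 * c 0 - a 0 * c 1) * e2
    rcases mul_eq_zero.mp hy with h' | h'
    · exact h'
    · exact absurd h' h

/-- **Proposition 4.** For a (q,l)-pair `(A, g)` and distinct indices `i, j, s`, let
`G_ij` be the harmonic conjugate of `U_ij = g ∩ A_iA_j` with respect to `A_i, A_j`,
and `G_js` the harmonic conjugate of `U_js` with respect to `A_j, A_s`.  Then the
line `G_ij G_js` passes through the point `U_is = g ∩ A_iA_s`. -/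
theorem G_points_line_through_Uis (A : Fin 4 → PPt) (g : PPt) (i j s : Fin 4)
    (hij : i ≠ j) (his : i ≠ s) (hjs : j ≠ s)
    (hql : QLPair A g)
    (Gij Gjs : PPt)
    (hGij : HarmonicConj (A i) (A j) Gij (U A g i j))
    (hGjs : HarmonicConj (A j) (A s) Gjs (U A g j s)) :
    collin Gij Gjs (U A g i s) := by
  obtain ⟨-, hnd, -, -, -, -⟩ := hql
  obtain ⟨α, β, γ, δ, -, -, hx, hy, hh⟩ := hGij
  obtain ⟨α', β', γ', δ', -, -, hx', hy', hh'⟩ := hGjs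
  -- first harmonic relation:  α * (A i ⬝ᵥ g) = β * (A j ⬝ᵥ g)
  have hyv : γ • A i + δ • A j = (A i ⬝ᵥ g) • A j - (A j ⬝ᵥ g) • A i := by
    rw [← hy, U, U_formula]
  have e0 := congrFun hyv 0
  have e1 := congrFun hyv 1
  have e2 := congrFun hyv 2
  simp only [Pi.add_apply, Pi.smul_apply, Pi.sub_apply, smul_eq_mul] at e0 e1 e2
  obtain ⟨hγ, hδ⟩ := indep' (hnd i j s hij his hjs)
    (x := γ + (A j ⬝ᵥ g)) (y := δ - (A i ⬝ᵥ g))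
    (by linear_combination e0) (by linear_combination e1) (by linear_combination e2)
  have h1 : α * (A i ⬝ᵥ g) - β * (A j ⬝ᵥ g) = 0 := by
    linear_combination hh - α * hδ - β * hγ
  -- second harmonic relation:  α' * (A j ⬝ᵥ g) = β' * (A s ⬝ᵥ g)
  have hyv' : γ' • A j + δ' • A s = (A j ⬝ᵥ g) • A s - (A s ⬝ᵥ g) • A j := by
    rw [← hy', U, U_formula]
  have f0 := congrFun hyv' 0
  have f1 := congrFun hyv' 1
  have f2 := congrFun hyv' 2
  simp only [Pi.add_apply, Pi.smul_apply, Pi.sub_apply, smul_eq_mul] at f0 f1 f2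
  obtain ⟨hγ', hδ'⟩ := indep' (hnd j s i hjs hij.symm his.symm)
    (x := γ' + (A s ⬝ᵥ g)) (y := δ' - (A j ⬝ᵥ g))
    (by linear_combination f0) (by linear_combination f1) (by linear_combination f2)
  have h2 : α' * (A j ⬝ᵥ g) - β' * (A s ⬝ᵥ g) = 0 := by
    linear_combination hh' - α' * hδ' - β' * hγ'
  -- the collinearity is now a polynomial identity
  rw [hx, hx', collin, U, U_formula, Matrix.det_fin_three]
  simp only [Matrix.of_apply, Matrix.cons_val', Matrix.cons_val_zero, Matrix.cons_val_one,
    Matrix.head_cons, Matrix.empty_val', Matrix.cons_val_fin_one, Matrix.head_fin_const,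
    Matrix.cons_val_two, Matrix.tail_cons, Pi.add_apply, Pi.smul_apply, Pi.sub_apply,
    smul_eq_mul]
  linear_combination
    (α' * (A i 0 * A j 1 * A s 2 - A i 0 * A j 2 * A s 1 - A i 1 * A j 0 * A s 2 +
      A i 1 * A j 2 * A s 0 + A i 2 * A j 0 * A s 1 - A i 2 * A j 1 * A s 0)) * h1 +
    (β * (A i 0 * A j 1 * A s 2 - A i 0 * A j 2 * A s 1 - A i 1 * A j 0 * A s 2 +
      A i 1 * A j 2 * A s 0 + A i 2 * A j 0 * A s 1 - A i 2 * A j 1 * A s 0)) * h2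
end
end

section
/- (Nine-point conic) Let (A₁A₂A₃A₄, g) be a (q,l)-pair. Let G_pq (for the six pairs p < q) be the harmonic conjugate of U_pq = g ∩ A_pA_q with respect to A_p, A_q, and let I = A₁A₃ ∩ A₂A₄, I' = A₁A₄ ∩ A₂A₃, Ī = A₁A₂ ∩ A₃A₄ be the three diagonal points of the quadrangle. Then the nine points G₁₂, G₁₃, G₁₄, G₂₃, G₂₄, G₃₄, I, I', Ī all lie on a single conic. -/
open Matrix

noncomputable section

namespace NinePointConic

/-- Scalar triple product. -/
def tri (a b c : PPt) : ℝ := pcross a b ⬝ᵥ c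

/-- Symmetric product of two lines, as a matrix. -/
def symM (l m : PPt) : Matrix (Fin 3) (Fin 3) ℝ := Matrix.of fun i j => l i * m j + l j * m i

lemma det_eq_tri (a b c : PPt) : Matrix.det (Matrix.of ![a, b, c]) = tri a b c := by
  simp [tri, pcross, cross_apply, dotProduct, Fin.sum_univ_three, Matrix.det_fin_three]
  ring

lemma tri_smul_left (s : ℝ) (b c : PPt) : tri (s • b) b c = 0 := by
  simp only [tri, pcross, cross_apply, dotProduct, Fin.sum_univ_three, Pi.smul_apply,
    smul_eq_mul, Matrix.cons_val_zero, Matrix.cons_val_one, Matrix.head_cons,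
    Matrix.cons_val_two, Matrix.tail_cons]
  ring

lemma tri_smul_right (s : ℝ) (a c : PPt) : tri a (s • a) c = 0 := by
  simp only [tri, pcross, cross_apply, dotProduct, Fin.sum_univ_three, Pi.smul_apply,
    smul_eq_mul, Matrix.cons_val_zero, Matrix.cons_val_one, Matrix.head_cons,
    Matrix.cons_val_two, Matrix.tail_cons]
  ring

lemma indep (a b c : PPt) (h : ¬ collin a b c) :
    ∀ x y : ℝ, x • a + y • b = 0 → x = 0 ∧ y = 0 := by
  intro x y hxy
  have hab : ∀ i, x * a i + y * b i = 0 := by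
    intro i
    have := congrFun hxy i
    simpa [Pi.add_apply, Pi.smul_apply, smul_eq_mul] using this
  constructor
  · by_contra hx
    apply h
    have ha : a = (-(y/x)) • b := by
      funext i
      have h' := hab i
      have h1 : a i = (-(y/x)) * b i := by
        field_simp
        linarith
      simpa [Pi.smul_apply, smul_eq_mul] using h1
    show Matrix.det (Matrix.of ![a, b, c]) = 0
    rw [det_eq_tri, ha]
    exact tri_smul_left _ _ _
  · by_contra hy
    apply h
    have hb : b = (-(x/y)) • a := by
      funext i
      have h' := hab i
      have h1 : b i = (-(x/y)) * a i := by
        field_simp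
        linarith
      simpa [Pi.smul_apply, smul_eq_mul] using h1
    show Matrix.det (Matrix.of ![a, b, c]) = 0
    rw [det_eq_tri, hb]
    exact tri_smul_right _ _ _

lemma harmonic_extract (a b G gl : PPt) (htb : b ⬝ᵥ gl ≠ 0)
    (hind : ∀ x y : ℝ, x • a + y • b = 0 → x = 0 ∧ y = 0)
    (hH : HarmonicConj a b G (pcross (pcross a b) gl)) :
    ∃ c : ℝ, G = c • ((b ⬝ᵥ gl) • a + (a ⬝ᵥ gl) • b) := by
  obtain ⟨α, β, γ, δ, h1, h2, h3, h4, h5⟩ := hH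
  have hU : pcross (pcross a b) gl = (a ⬝ᵥ gl) • b + (-(b ⬝ᵥ gl)) • a := by
    funext i
    fin_cases i <;>
      (simp [pcross, cross_apply, dotProduct, Fin.sum_univ_three, Pi.add_apply,
        Pi.smul_apply, smul_eq_mul]; ring)
  have hz : (γ + (b ⬝ᵥ gl)) • a + (δ - (a ⬝ᵥ gl)) • b = 0 := by
    funext i
    have h := congrFun (h4.symm.trans hU) i
    simp only [Pi.add_apply, Pi.smul_apply, smul_eq_mul, Pi.zero_apply] at h ⊢
    linarith
  obtain ⟨hγ, hδ⟩ := hind _ _ hz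
  have hγ' : γ = -(b ⬝ᵥ gl) := by linarith
  have hδ' : δ = a ⬝ᵥ gl := by linarith
  refine ⟨α / (b ⬝ᵥ gl), ?_⟩
  have h5' : α * (a ⬝ᵥ gl) - β * (b ⬝ᵥ gl) = 0 := by
    rw [hγ', hδ'] at h5
    linarith
  have hβ : β * (b ⬝ᵥ gl) = α * (a ⬝ᵥ gl) := by linarith [h5']
  rw [h3]
  funext i
  simp only [Pi.add_apply, Pi.smul_apply, smul_eq_mul]
  rw [div_mul_eq_mul_div, eq_div_iff htb]
  linear_combination (b i) * hβ

lemma quad_smul (M : Matrix (Fin 3) (Fin 3) ℝ) (c : ℝ) (x : PPt) :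
    (c • x) ⬝ᵥ (M *ᵥ (c • x)) = c ^ 2 * (x ⬝ᵥ (M *ᵥ x)) := by
  simp [Matrix.mulVec, dotProduct, Fin.sum_univ_three, Pi.smul_apply, smul_eq_mul]
  ring

lemma qm_eval (c1 c2 c3 c4 : ℝ) (p q r s x : PPt) :
    x ⬝ᵥ ((c1 • symM p q + c2 • symM p r - c3 • symM s q - c4 • symM s r) *ᵥ x)
      = 2 * (c1 * (p ⬝ᵥ x) * (q ⬝ᵥ x) + c2 * (p ⬝ᵥ x) * (r ⬝ᵥ x)
          - c3 * (s ⬝ᵥ x) * (q ⬝ᵥ x) - c4 * (s ⬝ᵥ x) * (r ⬝ᵥ x)) := by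
  simp [symM, Matrix.mulVec, dotProduct, Fin.sum_univ_three, Matrix.add_apply,
    Matrix.sub_apply, Matrix.smul_apply, Matrix.of_apply, smul_eq_mul]
  ring

lemma qm_isSymm (c1 c2 c3 c4 : ℝ) (p q r s : PPt) :
    (c1 • symM p q + c2 • symM p r - c3 • symM s q - c4 • symM s r).IsSymm := by
  show _ᵀ = _
  ext i j
  simp [symM, Matrix.transpose_apply, Matrix.add_apply, Matrix.sub_apply,
    Matrix.smul_apply, Matrix.of_apply, smul_eq_mul]
  ring

lemma dot_comb (l x y : PPt) (s r : ℝ) :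
    l ⬝ᵥ (s • x + r • y) = s * (l ⬝ᵥ x) + r * (l ⬝ᵥ y) := by
  simp [dotProduct, Fin.sum_univ_three, Pi.add_apply, Pi.smul_apply, smul_eq_mul]
  ring

lemma dot_pcross_left (u v : PPt) : u ⬝ᵥ pcross u v = 0 := by
  simp [pcross, cross_apply, dotProduct, Fin.sum_univ_three]
  ring

lemma dot_pcross_right (u v : PPt) : v ⬝ᵥ pcross u v = 0 := by
  simp [pcross, cross_apply, dotProduct, Fin.sum_univ_three]
  ring

lemma pcross_dot_left (u v : PPt) : pcross u v ⬝ᵥ u = 0 := by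
  simp [pcross, cross_apply, dotProduct, Fin.sum_univ_three]
  ring

lemma pcross_dot_right (u v : PPt) : pcross u v ⬝ᵥ v = 0 := by
  simp [pcross, cross_apply, dotProduct, Fin.sum_univ_three]
  ring

end NinePointConic

open NinePointConic

/-- **Theorem 7 (nine-point conic).** For a (q,l)-pair `(A, g)`, the six points
`G_pq` (the harmonic conjugates of `U_pq = g ∩ A_pA_q` with respect to `A_p, A_q`)
and the three diagonal points of the quadrangle lie on one conic. -/
theorem nine_point_conic (A : Fin 4 → PPt) (g : PPt)
    (hql : QLPair A g)
    (G12 G13 G14 G23 G24 G34 I I' Ibar : PPt)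
    (hG12 : HarmonicConj (A 0) (A 1) G12 (U A g 0 1))
    (hG13 : HarmonicConj (A 0) (A 2) G13 (U A g 0 2))
    (hG14 : HarmonicConj (A 0) (A 3) G14 (U A g 0 3))
    (hG23 : HarmonicConj (A 1) (A 2) G23 (U A g 1 2))
    (hG24 : HarmonicConj (A 1) (A 3) G24 (U A g 1 3))
    (hG34 : HarmonicConj (A 2) (A 3) G34 (U A g 2 3))
    (hI : I = pcross (pcross (A 0) (A 2)) (pcross (A 1) (A 3)))
    (hI' : I' = pcross (pcross (A 0) (A 3)) (pcross (A 1) (A 2)))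
    (hIbar : Ibar = pcross (pcross (A 0) (A 1)) (pcross (A 2) (A 3))) :
    ∃ Qm : Matrix (Fin 3) (Fin 3) ℝ, Qm ≠ 0 ∧ Qm.IsSymm ∧
      OnConic Qm G12 ∧ OnConic Qm G13 ∧ OnConic Qm G14 ∧
      OnConic Qm G23 ∧ OnConic Qm G24 ∧ OnConic Qm G34 ∧
      OnConic Qm I ∧ OnConic Qm I' ∧ OnConic Qm Ibar := by
  obtain ⟨hg0, hnd, hpt, -, -, -⟩ := hql
  have expand : True := trivial
  have hD012 : tri (A 0) (A 1) (A 2) ≠ 0 := by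
    intro h
    exact hnd 0 1 2 (by decide) (by decide) (by decide)
      (by show Matrix.det _ = 0; rw [det_eq_tri]; exact h)
  have hD013 : tri (A 0) (A 1) (A 3) ≠ 0 := by
    intro h
    exact hnd 0 1 3 (by decide) (by decide) (by decide)
      (by show Matrix.det _ = 0; rw [det_eq_tri]; exact h)
  have hD023 : tri (A 0) (A 2) (A 3) ≠ 0 := by
    intro h
    exact hnd 0 2 3 (by decide) (by decide) (by decide)
      (by show Matrix.det _ = 0; rw [det_eq_tri]; exact h)
  have hD123 : tri (A 1) (A 2) (A 3) ≠ 0 := by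
    intro h
    exact hnd 1 2 3 (by decide) (by decide) (by decide)
      (by show Matrix.det _ = 0; rw [det_eq_tri]; exact h)
  have hkey : tri (A 0) (A 1) (A 2) * (A 3 ⬝ᵥ g) - tri (A 0) (A 1) (A 3) * (A 2 ⬝ᵥ g)
      + tri (A 0) (A 2) (A 3) * (A 1 ⬝ᵥ g) - tri (A 1) (A 2) (A 3) * (A 0 ⬝ᵥ g) = 0 := by
    simp only [tri, pcross, cross_apply, dotProduct, Fin.sum_univ_three,
      Matrix.cons_val_zero, Matrix.cons_val_one, Matrix.head_cons,
      Matrix.cons_val_two, Matrix.tail_cons]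
    try ring
  have e23_0 : pcross (A 2) (A 3) ⬝ᵥ A 0 = tri (A 0) (A 2) (A 3) := by
    simp only [tri, pcross, cross_apply, dotProduct, Fin.sum_univ_three,
      Matrix.cons_val_zero, Matrix.cons_val_one, Matrix.head_cons,
      Matrix.cons_val_two, Matrix.tail_cons]
    try ring
  have e23_1 : pcross (A 2) (A 3) ⬝ᵥ A 1 = tri (A 1) (A 2) (A 3) := by
    simp only [tri, pcross, cross_apply, dotProduct, Fin.sum_univ_three,
      Matrix.cons_val_zero, Matrix.cons_val_one, Matrix.head_cons,
      Matrix.cons_val_two, Matrix.tail_cons]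
    try ring
  have e13_0 : pcross (A 1) (A 3) ⬝ᵥ A 0 = tri (A 0) (A 1) (A 3) := by
    simp only [tri, pcross, cross_apply, dotProduct, Fin.sum_univ_three,
      Matrix.cons_val_zero, Matrix.cons_val_one, Matrix.head_cons,
      Matrix.cons_val_two, Matrix.tail_cons]
    try ring
  have e13_2 : pcross (A 1) (A 3) ⬝ᵥ A 2 = -tri (A 1) (A 2) (A 3) := by
    simp only [tri, pcross, cross_apply, dotProduct, Fin.sum_univ_three,
      Matrix.cons_val_zero, Matrix.cons_val_one, Matrix.head_cons,
      Matrix.cons_val_two, Matrix.tail_cons]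
    try ring
  have e02_1 : pcross (A 0) (A 2) ⬝ᵥ A 1 = -tri (A 0) (A 1) (A 2) := by
    simp only [tri, pcross, cross_apply, dotProduct, Fin.sum_univ_three,
      Matrix.cons_val_zero, Matrix.cons_val_one, Matrix.head_cons,
      Matrix.cons_val_two, Matrix.tail_cons]
    try ring
  have e02_3 : pcross (A 0) (A 2) ⬝ᵥ A 3 = tri (A 0) (A 2) (A 3) := by
    simp only [tri, pcross, cross_apply, dotProduct, Fin.sum_univ_three,
      Matrix.cons_val_zero, Matrix.cons_val_one, Matrix.head_cons,
      Matrix.cons_val_two, Matrix.tail_cons]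
    try ring
  have e01_2 : pcross (A 0) (A 1) ⬝ᵥ A 2 = tri (A 0) (A 1) (A 2) := rfl
  have e01_3 : pcross (A 0) (A 1) ⬝ᵥ A 3 = tri (A 0) (A 1) (A 3) := rfl
  have hI'dec : pcross (pcross (A 0) (A 3)) (pcross (A 1) (A 2))
      = (-(tri (A 0) (A 2) (A 3))) • A 1 + (tri (A 0) (A 1) (A 3)) • A 2 := by
    funext i
    fin_cases i <;>
      (simp [tri, pcross, cross_apply, dotProduct, Fin.sum_univ_three]; ring)
  refine ⟨(tri (A 0) (A 1) (A 2) * (A 0 ⬝ᵥ g)) • symM (pcross (A 2) (A 3)) (pcross (A 1) (A 3))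
      + (tri (A 0) (A 1) (A 3) * (A 1 ⬝ᵥ g)) • symM (pcross (A 2) (A 3)) (pcross (A 0) (A 2))
      - (tri (A 0) (A 2) (A 3) * (A 2 ⬝ᵥ g)) • symM (pcross (A 0) (A 1)) (pcross (A 1) (A 3))
      - (tri (A 1) (A 2) (A 3) * (A 3 ⬝ᵥ g)) • symM (pcross (A 0) (A 1)) (pcross (A 0) (A 2)),
      ?_, qm_isSymm _ _ _ _ _ _ _ _, ?_, ?_, ?_, ?_, ?_, ?_, ?_, ?_, ?_⟩
  · -- nonzero
    intro h0
    have hval := congrArg (fun M : Matrix (Fin 3) (Fin 3) ℝ => (A 0) ⬝ᵥ (M *ᵥ (A 0))) h0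
    simp only [qm_eval, Matrix.zero_mulVec, dotProduct_zero, e23_0, e13_0,
      pcross_dot_left, pcross_dot_right] at hval
    have h2 : 2 * (tri (A 0) (A 1) (A 2) * (A 0 ⬝ᵥ g) * tri (A 0) (A 2) (A 3)
        * tri (A 0) (A 1) (A 3) + tri (A 0) (A 1) (A 3) * (A 1 ⬝ᵥ g) * tri (A 0) (A 2) (A 3) * 0
        - tri (A 0) (A 2) (A 3) * (A 2 ⬝ᵥ g) * 0 * tri (A 0) (A 1) (A 3)
        - tri (A 1) (A 2) (A 3) * (A 3 ⬝ᵥ g) * 0 * 0) ≠ 0 := by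
      have := hpt 0
      have h3 : tri (A 0) (A 1) (A 2) * (A 0 ⬝ᵥ g) * tri (A 0) (A 2) (A 3)
          * tri (A 0) (A 1) (A 3) ≠ 0 :=
        mul_ne_zero (mul_ne_zero (mul_ne_zero hD012 (hpt 0)) hD023) hD013
      intro h4
      apply h3
      linarith
    exact h2 hval
  · -- G12, pair (0,1)
    obtain ⟨c, hc⟩ := harmonic_extract (A 0) (A 1) G12 g (hpt 1)
      (indep (A 0) (A 1) (A 2) (hnd 0 1 2 (by decide) (by decide) (by decide))) hG12
    show _ ⬝ᵥ (_ *ᵥ _) = 0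
    rw [hc, quad_smul, qm_eval]
    simp only [dot_comb, e23_0, e23_1, e13_0, e13_2, e02_1, e02_3, e01_2, e01_3,
      pcross_dot_left, pcross_dot_right]
    ring
  · -- G13, pair (0,2)
    obtain ⟨c, hc⟩ := harmonic_extract (A 0) (A 2) G13 g (hpt 2)
      (indep (A 0) (A 2) (A 1) (hnd 0 2 1 (by decide) (by decide) (by decide))) hG13
    show _ ⬝ᵥ (_ *ᵥ _) = 0
    rw [hc, quad_smul, qm_eval]
    simp only [dot_comb, e23_0, e23_1, e13_0, e13_2, e02_1, e02_3, e01_2, e01_3,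
      pcross_dot_left, pcross_dot_right]
    ring
  · -- G14, pair (0,3)
    obtain ⟨c, hc⟩ := harmonic_extract (A 0) (A 3) G14 g (hpt 3)
      (indep (A 0) (A 3) (A 1) (hnd 0 3 1 (by decide) (by decide) (by decide))) hG14
    show _ ⬝ᵥ (_ *ᵥ _) = 0
    rw [hc, quad_smul, qm_eval]
    simp only [dot_comb, e23_0, e23_1, e13_0, e13_2, e02_1, e02_3, e01_2, e01_3,
      pcross_dot_left, pcross_dot_right]
    linear_combination (c ^ 2 * 2 * (A 0 ⬝ᵥ g) * (A 3 ⬝ᵥ g) * tri (A 0) (A 1) (A 3)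
      * tri (A 0) (A 2) (A 3)) * hkey
  · -- G23, pair (1,2)
    obtain ⟨c, hc⟩ := harmonic_extract (A 1) (A 2) G23 g (hpt 2)
      (indep (A 1) (A 2) (A 0) (hnd 1 2 0 (by decide) (by decide) (by decide))) hG23
    show _ ⬝ᵥ (_ *ᵥ _) = 0
    rw [hc, quad_smul, qm_eval]
    simp only [dot_comb, e23_0, e23_1, e13_0, e13_2, e02_1, e02_3, e01_2, e01_3,
      pcross_dot_left, pcross_dot_right]
    linear_combination (c ^ 2 * 2 * (A 1 ⬝ᵥ g) * (A 2 ⬝ᵥ g) * tri (A 0) (A 1) (A 2)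
      * tri (A 1) (A 2) (A 3)) * hkey
  · -- G24, pair (1,3)
    obtain ⟨c, hc⟩ := harmonic_extract (A 1) (A 3) G24 g (hpt 3)
      (indep (A 1) (A 3) (A 0) (hnd 1 3 0 (by decide) (by decide) (by decide))) hG24
    show _ ⬝ᵥ (_ *ᵥ _) = 0
    rw [hc, quad_smul, qm_eval]
    simp only [dot_comb, e23_0, e23_1, e13_0, e13_2, e02_1, e02_3, e01_2, e01_3,
      pcross_dot_left, pcross_dot_right]
    ring
  · -- G34, pair (2,3)
    obtain ⟨c, hc⟩ := harmonic_extract (A 2) (A 3) G34 g (hpt 3)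
      (indep (A 2) (A 3) (A 0) (hnd 2 3 0 (by decide) (by decide) (by decide))) hG34
    show _ ⬝ᵥ (_ *ᵥ _) = 0
    rw [hc, quad_smul, qm_eval]
    simp only [dot_comb, e23_0, e23_1, e13_0, e13_2, e02_1, e02_3, e01_2, e01_3,
      pcross_dot_left, pcross_dot_right]
    ring
  · -- I
    show _ ⬝ᵥ (_ *ᵥ _) = 0
    rw [hI, qm_eval]
    simp only [dot_pcross_left, dot_pcross_right]
    ring
  · -- I'
    show _ ⬝ᵥ (_ *ᵥ _) = 0
    rw [hI', qm_eval, hI'dec]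
    simp only [dot_comb, e23_0, e23_1, e13_0, e13_2, e02_1, e02_3, e01_2, e01_3,
      pcross_dot_left, pcross_dot_right]
    linear_combination (-2 * tri (A 0) (A 1) (A 2) * tri (A 0) (A 1) (A 3)
      * tri (A 0) (A 2) (A 3) * tri (A 1) (A 2) (A 3)) * hkey
  · -- Ibar
    show _ ⬝ᵥ (_ *ᵥ _) = 0
    rw [hIbar, qm_eval]
    simp only [dot_pcross_left, dot_pcross_right]
    ring
end
end

section
/- Let (A₁A₂A₃A₄, g) be a (q,l)-pair with nine-point conic k (through the six G-points and three diagonal points), assumed nondegenerate. Then the three lines G₁₂G₃₄, G₁₃G₂₄, G₁₄G₂₃ are concurrent, and their common point G is the pole of the line g with respect to k. -/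
open Matrix

noncomputable section

/- ### Auxiliary lemmas -/

private lemma cross_cross_dot (a b g : PPt) :
    pcross (pcross a b) g = (a ⬝ᵥ g) • b - (b ⬝ᵥ g) • a := by
  funext i
  fin_cases i <;>
  · simp [pcross, crossProduct, dotProduct, Fin.sum_univ_three]
    ring

private lemma det_smul3 (x y z : ℝ) (a b c : PPt) :
    Matrix.det (Matrix.of ![x•a, y•b, z•c]) = x*y*z*Matrix.det (Matrix.of ![a,b,c]) := by
  simp only [Matrix.det_fin_three, Matrix.of_apply, Matrix.cons_val', Matrix.cons_val_zero,
    Matrix.cons_val_one, Matrix.head_cons, Matrix.head_fin_const, Matrix.empty_val',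
    Matrix.cons_val_fin_one, Matrix.cons_val_two, Matrix.tail_cons, Pi.smul_apply, smul_eq_mul]
  ring

private lemma cramer3 (a b c d : PPt) :
    Matrix.det (Matrix.of ![a,b,c]) • d =
      Matrix.det (Matrix.of ![d,b,c]) • a + Matrix.det (Matrix.of ![a,d,c]) • b +
      Matrix.det (Matrix.of ![a,b,d]) • c := by
  funext i
  fin_cases i <;>
  · simp [Matrix.det_fin_three]
    ring

private lemma indep3 {a b c : PPt} (h : Matrix.det (Matrix.of ![a,b,c]) ≠ 0)
    {x y z : ℝ} (hxy : x • a + y • b + z • c = 0) : x = 0 ∧ y = 0 ∧ z = 0 := by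
  have hx : x * Matrix.det (Matrix.of ![a,b,c]) =
      Matrix.det (Matrix.of ![x•a + y•b + z•c, b, c]) := by
    simp [Matrix.det_fin_three]; ring
  have hy : y * Matrix.det (Matrix.of ![a,b,c]) =
      Matrix.det (Matrix.of ![a, x•a + y•b + z•c, c]) := by
    simp [Matrix.det_fin_three]; ring
  have hz : z * Matrix.det (Matrix.of ![a,b,c]) =
      Matrix.det (Matrix.of ![a, b, x•a + y•b + z•c]) := by
    simp [Matrix.det_fin_three]; ring
  rw [hxy] at hx hy hz
  have z1 : Matrix.det (Matrix.of ![(0:PPt), b, c]) = 0 := by simp [Matrix.det_fin_three]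
  have z2 : Matrix.det (Matrix.of ![a, (0:PPt), c]) = 0 := by simp [Matrix.det_fin_three]
  have z3 : Matrix.det (Matrix.of ![a, b, (0:PPt)]) = 0 := by simp [Matrix.det_fin_three]
  rw [z1] at hx; rw [z2] at hy; rw [z3] at hz
  exact ⟨(mul_eq_zero.mp hx).resolve_right h, (mul_eq_zero.mp hy).resolve_right h,
    (mul_eq_zero.mp hz).resolve_right h⟩

private lemma indep2 {a b c : PPt} (h : Matrix.det (Matrix.of ![a,b,c]) ≠ 0)
    {x y : ℝ} (hxy : x • a + y • b = 0) : x = 0 ∧ y = 0 := by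
  have : x • a + y • b + (0:ℝ) • c = 0 := by simpa using hxy
  obtain ⟨h1, h2, _⟩ := indep3 h this
  exact ⟨h1, h2⟩

private lemma dot_mulVec_symm {Qm : Matrix (Fin 3) (Fin 3) ℝ} (hsymm : Qm.IsSymm)
    (u v : PPt) : u ⬝ᵥ (Qm *ᵥ v) = v ⬝ᵥ (Qm *ᵥ u) := by
  have key : u ᵥ* Qm = Qm *ᵥ u := by rw [← Matrix.vecMul_transpose, hsymm.eq]
  rw [Matrix.dotProduct_mulVec, key, dotProduct_comm]

private lemma onConic_smul_add {Qm : Matrix (Fin 3) (Fin 3) ℝ} (hsymm : Qm.IsSymm) {μ : ℝ}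
    (hμ : μ ≠ 0) {u v : PPt} (h : OnConic Qm (μ • (u + v))) :
    u ⬝ᵥ (Qm *ᵥ u) + 2 * (u ⬝ᵥ (Qm *ᵥ v)) + v ⬝ᵥ (Qm *ᵥ v) = 0 := by
  unfold OnConic at h
  simp only [Matrix.mulVec_smul, Matrix.mulVec_add, dotProduct_smul,
    smul_dotProduct, dotProduct_add, add_dotProduct, smul_eq_mul] at h
  rw [dot_mulVec_symm hsymm v u] at h
  have h2 : μ * μ * (u ⬝ᵥ (Qm *ᵥ u) + 2 * (u ⬝ᵥ (Qm *ᵥ v)) + v ⬝ᵥ (Qm *ᵥ v)) = 0 := by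
    rw [← h]; ring
  rcases mul_eq_zero.mp h2 with h'|h'
  · exact absurd h' (mul_ne_zero hμ hμ)
  · exact h'

private lemma collin_smul_smul_add (μ ν : ℝ) (u v : PPt) : collin (μ • u) (ν • v) (u + v) := by
  simp only [collin, Matrix.det_fin_three, Matrix.of_apply, Matrix.cons_val', Matrix.cons_val_zero,
    Matrix.cons_val_one, Matrix.head_cons, Matrix.empty_val', Matrix.cons_val_fin_one,
    Matrix.cons_val_two, Matrix.tail_cons, Matrix.vecHead, Pi.smul_apply, Pi.add_apply,
    smul_eq_mul]
  ring

private lemma harm_extract {a b c x u : PPt} {sa sb : ℝ} (hsa : sa ≠ 0) (hsb : sb ≠ 0)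
    (hdet : Matrix.det (Matrix.of ![a,b,c]) ≠ 0)
    (hu : u = sa • b - sb • a)
    (h : HarmonicConj a b x u) :
    ∃ μ : ℝ, μ ≠ 0 ∧ x = μ • (sa⁻¹ • a + sb⁻¹ • b) := by
  obtain ⟨α, β, γ, δ, hαβ, hγδ, hx, hy, hh⟩ := h
  have hgd : (γ + sb) • a + (δ - sa) • b = 0 := by
    rw [hu] at hy
    have : γ • a + δ • b - (sa • b - sb • a) = 0 := by rw [← hy]; abel
    rw [← this]; module
  obtain ⟨hg, hd⟩ := indep2 hdet hgd
  have hγ : γ = -sb := by linarith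
  have hδ : δ = sa := by linarith
  rw [hγ, hδ] at hh
  refine ⟨α * sa, ?_, ?_⟩
  · intro h0
    have hα : α = 0 := by
      rcases mul_eq_zero.mp h0 with h'|h'
      · exact h'
      · exact absurd h' hsa
    have hβ : β = 0 := by
      have : β * sb = 0 := by linarith
      rcases mul_eq_zero.mp this with h'|h'
      · exact h'
      · exact absurd h' hsb
    exact hαβ (by rw [hα, hβ])
  · rw [hx]
    have hβ : β = α * sa * sb⁻¹ := by field_simp; linarith
    rw [hβ]
    funext i
    simp only [Pi.add_apply, Pi.smul_apply, smul_eq_mul]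
    field_simp

private lemma mul_mul_transpose_apply (P Q : Matrix (Fin 3) (Fin 3) ℝ) (i j : Fin 3) :
    (P * Q * Pᵀ) i j = (P i) ⬝ᵥ (Q *ᵥ (P j)) := by
  rw [Matrix.mul_assoc, Matrix.mul_apply]
  simp [Matrix.mul_apply, Matrix.mulVec, dotProduct, Matrix.transpose_apply,
    Finset.mul_sum, mul_assoc]

/-- **Theorem 8.** For a (q,l)-pair `(A, g)` with nondegenerate nine-point conic `Qm`
(through the six `G`-points and the three diagonal points), the lines `G12G34`,
`G13G24`, `G14G23` are concurrent, and their common point `G` is the pole of the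
line `g` with respect to the conic. -/
theorem pole_of_nine_point_conic (A : Fin 4 → PPt) (g : PPt)
    (hql : QLPair A g)
    (G12 G13 G14 G23 G24 G34 I I' Ibar : PPt)
    (hG12 : HarmonicConj (A 0) (A 1) G12 (U A g 0 1))
    (hG13 : HarmonicConj (A 0) (A 2) G13 (U A g 0 2))
    (hG14 : HarmonicConj (A 0) (A 3) G14 (U A g 0 3))
    (hG23 : HarmonicConj (A 1) (A 2) G23 (U A g 1 2))
    (hG24 : HarmonicConj (A 1) (A 3) G24 (U A g 1 3))
    (hG34 : HarmonicConj (A 2) (A 3) G34 (U A g 2 3))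
    (hI : I = pcross (pcross (A 0) (A 2)) (pcross (A 1) (A 3)))
    (hI' : I' = pcross (pcross (A 0) (A 3)) (pcross (A 1) (A 2)))
    (hIbar : Ibar = pcross (pcross (A 0) (A 1)) (pcross (A 2) (A 3)))
    (Qm : Matrix (Fin 3) (Fin 3) ℝ) (hsymm : Qm.IsSymm) (hdet : Qm.det ≠ 0)
    (h1 : OnConic Qm G12) (h2 : OnConic Qm G13) (h3 : OnConic Qm G14)
    (h4 : OnConic Qm G23) (h5 : OnConic Qm G24) (h6 : OnConic Qm G34)
    (h7 : OnConic Qm I) (h8 : OnConic Qm I') (h9 : OnConic Qm Ibar) :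
    ∃ G : PPt, G ≠ 0 ∧ collin G12 G34 G ∧ collin G13 G24 G ∧ collin G14 G23 G ∧
      ∃ t : ℝ, t ≠ 0 ∧ Qm *ᵥ G = t • g := by
  obtain ⟨hg0, hnd, hs, hd1, hd2, hd3⟩ := hql
  set B : Fin 4 → PPt := fun p => (A p ⬝ᵥ g)⁻¹ • A p with hBdef
  have hBg : ∀ p, B p ⬝ᵥ g = 1 := by
    intro p
    simp only [hBdef, smul_dotProduct, smul_eq_mul]
    exact inv_mul_cancel₀ (hs p)
  have hdetB : ∀ p q r : Fin 4, p ≠ q → p ≠ r → q ≠ r →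
      Matrix.det (Matrix.of ![B p, B q, B r]) ≠ 0 := by
    intro p q r hpq hpr hqr
    have h1 : ¬ collin (A p) (A q) (A r) := hnd p q r hpq hpr hqr
    simp only [hBdef]
    rw [det_smul3]
    exact mul_ne_zero (mul_ne_zero (mul_ne_zero (inv_ne_zero (hs p)) (inv_ne_zero (hs q)))
      (inv_ne_zero (hs r))) h1
  have hU : ∀ p q : Fin 4, U A g p q = (A p ⬝ᵥ g) • A q - (A q ⬝ᵥ g) • A p :=
    fun p q => cross_cross_dot (A p) (A q) g
  -- extract the G-points in normalized form
  obtain ⟨μ12, hμ12, hG12'⟩ := harm_extract (hs 0) (hs 1)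
    (hnd 0 1 2 (by decide) (by decide) (by decide)) (hU 0 1) hG12
  obtain ⟨μ13, hμ13, hG13'⟩ := harm_extract (hs 0) (hs 2)
    (hnd 0 2 1 (by decide) (by decide) (by decide)) (hU 0 2) hG13
  obtain ⟨μ14, hμ14, hG14'⟩ := harm_extract (hs 0) (hs 3)
    (hnd 0 3 1 (by decide) (by decide) (by decide)) (hU 0 3) hG14
  obtain ⟨μ23, hμ23, hG23'⟩ := harm_extract (hs 1) (hs 2)
    (hnd 1 2 0 (by decide) (by decide) (by decide)) (hU 1 2) hG23
  obtain ⟨μ24, hμ24, hG24'⟩ := harm_extract (hs 1) (hs 3)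
    (hnd 1 3 0 (by decide) (by decide) (by decide)) (hU 1 3) hG24
  obtain ⟨μ34, hμ34, hG34'⟩ := harm_extract (hs 2) (hs 3)
    (hnd 2 3 0 (by decide) (by decide) (by decide)) (hU 2 3) hG34
  have hG12B : G12 = μ12 • (B 0 + B 1) := by simp only [hBdef]; exact hG12'
  have hG13B : G13 = μ13 • (B 0 + B 2) := by simp only [hBdef]; exact hG13'
  have hG14B : G14 = μ14 • (B 0 + B 3) := by simp only [hBdef]; exact hG14'
  have hG23B : G23 = μ23 • (B 1 + B 2) := by simp only [hBdef]; exact hG23'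
  have hG24B : G24 = μ24 • (B 1 + B 3) := by simp only [hBdef]; exact hG24'
  have hG34B : G34 = μ34 • (B 2 + B 3) := by simp only [hBdef]; exact hG34'
  -- decompose B 3 in the basis B 0, B 1, B 2
  have hD : Matrix.det (Matrix.of ![B 0, B 1, B 2]) ≠ 0 :=
    hdetB 0 1 2 (by decide) (by decide) (by decide)
  obtain ⟨av, bv, cv, hav, hbv, hcv, hdecomp⟩ :
      ∃ av bv cv : ℝ, av ≠ 0 ∧ bv ≠ 0 ∧ cv ≠ 0 ∧
        B 3 = av • B 0 + bv • B 1 + cv • B 2 := by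
    refine ⟨(Matrix.det (Matrix.of ![B 0, B 1, B 2]))⁻¹ * Matrix.det (Matrix.of ![B 3, B 1, B 2]),
      (Matrix.det (Matrix.of ![B 0, B 1, B 2]))⁻¹ * Matrix.det (Matrix.of ![B 0, B 3, B 2]),
      (Matrix.det (Matrix.of ![B 0, B 1, B 2]))⁻¹ * Matrix.det (Matrix.of ![B 0, B 1, B 3]),
      ?_, ?_, ?_, ?_⟩
    · exact mul_ne_zero (inv_ne_zero hD) (hdetB 3 1 2 (by decide) (by decide) (by decide))
    · exact mul_ne_zero (inv_ne_zero hD) (hdetB 0 3 2 (by decide) (by decide) (by decide))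
    · exact mul_ne_zero (inv_ne_zero hD) (hdetB 0 1 3 (by decide) (by decide) (by decide))
    · have h3 : B 3 = (Matrix.det (Matrix.of ![B 0, B 1, B 2]))⁻¹ •
          (Matrix.det (Matrix.of ![B 0, B 1, B 2]) • B 3) := by
        rw [smul_smul, inv_mul_cancel₀ hD, one_smul]
      conv_lhs => rw [h3, cramer3 (B 0) (B 1) (B 2) (B 3)]
      simp only [smul_add, smul_smul]
  have habc1 : av + bv + cv = 1 := by
    have hdg := congrArg (fun v : PPt => v ⬝ᵥ g) hdecomp
    simp only [add_dotProduct, smul_dotProduct, smul_eq_mul, hBg, mul_one] at hdg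
    linarith
  -- conic equations for the six G-points
  have e01 := onConic_smul_add hsymm hμ12 (hG12B ▸ h1)
  have e02 := onConic_smul_add hsymm hμ13 (hG13B ▸ h2)
  have e03 := onConic_smul_add hsymm hμ14 (hG14B ▸ h3)
  have e12 := onConic_smul_add hsymm hμ23 (hG23B ▸ h4)
  have e13 := onConic_smul_add hsymm hμ24 (hG24B ▸ h5)
  have e23 := onConic_smul_add hsymm hμ34 (hG34B ▸ h6)
  -- expansions of pairings with B 3
  have hf03 : B 0 ⬝ᵥ (Qm *ᵥ B 3) = av * (B 0 ⬝ᵥ (Qm *ᵥ B 0)) + bv * (B 0 ⬝ᵥ (Qm *ᵥ B 1))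
      + cv * (B 0 ⬝ᵥ (Qm *ᵥ B 2)) := by
    conv_lhs => rw [hdecomp]
    simp only [Matrix.mulVec_add, Matrix.mulVec_smul, dotProduct_add,
      dotProduct_smul, smul_eq_mul]
  have hf13 : B 1 ⬝ᵥ (Qm *ᵥ B 3) = av * (B 0 ⬝ᵥ (Qm *ᵥ B 1)) + bv * (B 1 ⬝ᵥ (Qm *ᵥ B 1))
      + cv * (B 1 ⬝ᵥ (Qm *ᵥ B 2)) := by
    conv_lhs => rw [hdecomp]
    simp only [Matrix.mulVec_add, Matrix.mulVec_smul, dotProduct_add,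
      dotProduct_smul, smul_eq_mul]
    rw [dot_mulVec_symm hsymm (B 1) (B 0)]
  have hf23 : B 2 ⬝ᵥ (Qm *ᵥ B 3) = av * (B 0 ⬝ᵥ (Qm *ᵥ B 2)) + bv * (B 1 ⬝ᵥ (Qm *ᵥ B 2))
      + cv * (B 2 ⬝ᵥ (Qm *ᵥ B 2)) := by
    conv_lhs => rw [hdecomp]
    simp only [Matrix.mulVec_add, Matrix.mulVec_smul, dotProduct_add,
      dotProduct_smul, smul_eq_mul]
    rw [dot_mulVec_symm hsymm (B 2) (B 0), dot_mulVec_symm hsymm (B 2) (B 1)]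
  -- the key algebraic consequences
  have eqA : B 3 ⬝ᵥ (Qm *ᵥ B 3) = -3*av*(B 0 ⬝ᵥ (Qm *ᵥ B 0)) + bv*(B 1 ⬝ᵥ (Qm *ᵥ B 1))
      + cv*(B 2 ⬝ᵥ (Qm *ᵥ B 2)) := by
    linear_combination e03 - 2*hf03 - bv*e01 - cv*e02 + (B 0 ⬝ᵥ (Qm *ᵥ B 0))*habc1
  have eqB : B 3 ⬝ᵥ (Qm *ᵥ B 3) = av*(B 0 ⬝ᵥ (Qm *ᵥ B 0)) - 3*bv*(B 1 ⬝ᵥ (Qm *ᵥ B 1))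
      + cv*(B 2 ⬝ᵥ (Qm *ᵥ B 2)) := by
    linear_combination e13 - 2*hf13 - av*e01 - cv*e12 + (B 1 ⬝ᵥ (Qm *ᵥ B 1))*habc1
  have eqC : B 3 ⬝ᵥ (Qm *ᵥ B 3) = av*(B 0 ⬝ᵥ (Qm *ᵥ B 0)) + bv*(B 1 ⬝ᵥ (Qm *ᵥ B 1))
      - 3*cv*(B 2 ⬝ᵥ (Qm *ᵥ B 2)) := by
    linear_combination e23 - 2*hf23 - av*e02 - bv*e12 + (B 2 ⬝ᵥ (Qm *ᵥ B 2))*habc1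
  have F1 : av*(B 0 ⬝ᵥ (Qm *ᵥ B 0)) = bv*(B 1 ⬝ᵥ (Qm *ᵥ B 1)) := by linarith
  have F2 : av*(B 0 ⬝ᵥ (Qm *ᵥ B 0)) = cv*(B 2 ⬝ᵥ (Qm *ᵥ B 2)) := by linarith
  have hq3v : B 3 ⬝ᵥ (Qm *ᵥ B 3) = -(av*(B 0 ⬝ᵥ (Qm *ᵥ B 0))) := by linarith
  refine ⟨B 0 + B 1 + B 2 + B 3, ?_, ?_, ?_, ?_,
    -(B 0 ⬝ᵥ (Qm *ᵥ B 0) + B 1 ⬝ᵥ (Qm *ᵥ B 1) + B 2 ⬝ᵥ (Qm *ᵥ B 2) + B 3 ⬝ᵥ (Qm *ᵥ B 3))/2,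
    ?_, ?_⟩
  · -- G ≠ 0
    intro h0
    rw [hdecomp] at h0
    have h1' : (1+av) • B 0 + (1+bv) • B 1 + (1+cv) • B 2 = 0 := by
      rw [← h0]; module
    obtain ⟨ha', hb', hc'⟩ := indep3 hD h1'
    linarith
  · -- collin G12 G34 G
    have hGsum : B 0 + B 1 + B 2 + B 3 = (B 0 + B 1) + (B 2 + B 3) := by abel
    rw [hG12B, hG34B, hGsum]
    exact collin_smul_smul_add _ _ _ _
  · -- collin G13 G24 G
    have hGsum : B 0 + B 1 + B 2 + B 3 = (B 0 + B 2) + (B 1 + B 3) := by abel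
    rw [hG13B, hG24B, hGsum]
    exact collin_smul_smul_add _ _ _ _
  · -- collin G14 G23 G
    have hGsum : B 0 + B 1 + B 2 + B 3 = (B 0 + B 3) + (B 1 + B 2) := by abel
    rw [hG14B, hG23B, hGsum]
    exact collin_smul_smul_add _ _ _ _
  · -- t ≠ 0
    intro ht
    have hS0 : B 0 ⬝ᵥ (Qm *ᵥ B 0) + B 1 ⬝ᵥ (Qm *ᵥ B 1) + B 2 ⬝ᵥ (Qm *ᵥ B 2)
        + B 3 ⬝ᵥ (Qm *ᵥ B 3) = 0 := by linarith
    have hm : B 0 ⬝ᵥ (Qm *ᵥ B 0) + B 1 ⬝ᵥ (Qm *ᵥ B 1) + B 2 ⬝ᵥ (Qm *ᵥ B 2)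
        = av*(B 0 ⬝ᵥ (Qm *ᵥ B 0)) := by linarith
    have heee : (B 0 ⬝ᵥ (Qm *ᵥ B 0))*(B 1 ⬝ᵥ (Qm *ᵥ B 1))*(B 2 ⬝ᵥ (Qm *ᵥ B 2)) =
        (B 0 ⬝ᵥ (Qm *ᵥ B 0) + B 1 ⬝ᵥ (Qm *ᵥ B 1) + B 2 ⬝ᵥ (Qm *ᵥ B 2)) *
        ((B 0 ⬝ᵥ (Qm *ᵥ B 0))*(B 1 ⬝ᵥ (Qm *ᵥ B 1)) + (B 1 ⬝ᵥ (Qm *ᵥ B 1))*(B 2 ⬝ᵥ (Qm *ᵥ B 2))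
          + (B 0 ⬝ᵥ (Qm *ᵥ B 0))*(B 2 ⬝ᵥ (Qm *ᵥ B 2))) := by
      linear_combination
        (-((B 0 ⬝ᵥ (Qm *ᵥ B 0))*(B 1 ⬝ᵥ (Qm *ᵥ B 1)) + (B 1 ⬝ᵥ (Qm *ᵥ B 1))*(B 2 ⬝ᵥ (Qm *ᵥ B 2))
          + (B 0 ⬝ᵥ (Qm *ᵥ B 0))*(B 2 ⬝ᵥ (Qm *ᵥ B 2))))*hm
        - ((B 0 ⬝ᵥ (Qm *ᵥ B 0))*(B 2 ⬝ᵥ (Qm *ᵥ B 2)))*F1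
        - ((B 0 ⬝ᵥ (Qm *ᵥ B 0))*(B 1 ⬝ᵥ (Qm *ᵥ B 1)))*F2
        - ((B 0 ⬝ᵥ (Qm *ᵥ B 0))*(B 1 ⬝ᵥ (Qm *ᵥ B 1))*(B 2 ⬝ᵥ (Qm *ᵥ B 2)))*habc1
    have hNdet : (Matrix.of ![B 0, B 1, B 2] * Qm * (Matrix.of ![B 0, B 1, B 2])ᵀ).det ≠ 0 := by
      rw [Matrix.det_mul, Matrix.det_mul, Matrix.det_transpose]
      exact mul_ne_zero (mul_ne_zero hD hdet) hD
    apply hNdet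
    have hP0 : (Matrix.of ![B 0, B 1, B 2] : Matrix (Fin 3) (Fin 3) ℝ) 0 = B 0 := rfl
    have hP1 : (Matrix.of ![B 0, B 1, B 2] : Matrix (Fin 3) (Fin 3) ℝ) 1 = B 1 := rfl
    have hP2 : (Matrix.of ![B 0, B 1, B 2] : Matrix (Fin 3) (Fin 3) ℝ) 2 = B 2 := rfl
    rw [Matrix.det_fin_three]
    simp only [mul_mul_transpose_apply, hP0, hP1, hP2]
    rw [dot_mulVec_symm hsymm (B 1) (B 0), dot_mulVec_symm hsymm (B 2) (B 0),
      dot_mulVec_symm hsymm (B 2) (B 1)]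
    have hf01v : B 0 ⬝ᵥ (Qm *ᵥ B 1) = -(B 0 ⬝ᵥ (Qm *ᵥ B 0) + B 1 ⬝ᵥ (Qm *ᵥ B 1))/2 := by
      linarith
    have hf02v : B 0 ⬝ᵥ (Qm *ᵥ B 2) = -(B 0 ⬝ᵥ (Qm *ᵥ B 0) + B 2 ⬝ᵥ (Qm *ᵥ B 2))/2 := by
      linarith
    have hf12v : B 1 ⬝ᵥ (Qm *ᵥ B 2) = -(B 1 ⬝ᵥ (Qm *ᵥ B 1) + B 2 ⬝ᵥ (Qm *ᵥ B 2))/2 := by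
      linarith
    rw [hf01v, hf02v, hf12v]
    linear_combination (1/2) * heee
  · -- the pole identity
    have k0 : B 0 ⬝ᵥ (Qm *ᵥ (B 0 + B 1 + B 2 + B 3)) =
        -(B 0 ⬝ᵥ (Qm *ᵥ B 0) + B 1 ⬝ᵥ (Qm *ᵥ B 1) + B 2 ⬝ᵥ (Qm *ᵥ B 2) + B 3 ⬝ᵥ (Qm *ᵥ B 3))/2 := by
      simp only [Matrix.mulVec_add, dotProduct_add]
      linarith
    have k1 : B 1 ⬝ᵥ (Qm *ᵥ (B 0 + B 1 + B 2 + B 3)) =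
        -(B 0 ⬝ᵥ (Qm *ᵥ B 0) + B 1 ⬝ᵥ (Qm *ᵥ B 1) + B 2 ⬝ᵥ (Qm *ᵥ B 2) + B 3 ⬝ᵥ (Qm *ᵥ B 3))/2 := by
      simp only [Matrix.mulVec_add, dotProduct_add]
      rw [dot_mulVec_symm hsymm (B 1) (B 0)]
      linarith
    have k2 : B 2 ⬝ᵥ (Qm *ᵥ (B 0 + B 1 + B 2 + B 3)) =
        -(B 0 ⬝ᵥ (Qm *ᵥ B 0) + B 1 ⬝ᵥ (Qm *ᵥ B 1) + B 2 ⬝ᵥ (Qm *ᵥ B 2) + B 3 ⬝ᵥ (Qm *ᵥ B 3))/2 := by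
      simp only [Matrix.mulVec_add, dotProduct_add]
      rw [dot_mulVec_symm hsymm (B 2) (B 0), dot_mulVec_symm hsymm (B 2) (B 1)]
      linarith
    set t : ℝ := -(B 0 ⬝ᵥ (Qm *ᵥ B 0) + B 1 ⬝ᵥ (Qm *ᵥ B 1) + B 2 ⬝ᵥ (Qm *ᵥ B 2)
      + B 3 ⬝ᵥ (Qm *ᵥ B 3))/2 with htdef
    have hv0 : B 0 ⬝ᵥ (Qm *ᵥ (B 0 + B 1 + B 2 + B 3) - t • g) = 0 := by
      rw [dotProduct_sub, dotProduct_smul, k0, hBg 0, smul_eq_mul, mul_one, sub_self]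
    have hv1 : B 1 ⬝ᵥ (Qm *ᵥ (B 0 + B 1 + B 2 + B 3) - t • g) = 0 := by
      rw [dotProduct_sub, dotProduct_smul, k1, hBg 1, smul_eq_mul, mul_one, sub_self]
    have hv2 : B 2 ⬝ᵥ (Qm *ᵥ (B 0 + B 1 + B 2 + B 3) - t • g) = 0 := by
      rw [dotProduct_sub, dotProduct_smul, k2, hBg 2, smul_eq_mul, mul_one, sub_self]
    have hPv : Matrix.of ![B 0, B 1, B 2] *ᵥ (Qm *ᵥ (B 0 + B 1 + B 2 + B 3) - t • g) = 0 := by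
      funext i
      fin_cases i
      · exact hv0
      · exact hv1
      · exact hv2
    have h1' : (Matrix.of ![B 0, B 1, B 2])⁻¹ *ᵥ (Matrix.of ![B 0, B 1, B 2] *ᵥ
        (Qm *ᵥ (B 0 + B 1 + B 2 + B 3) - t • g)) = Qm *ᵥ (B 0 + B 1 + B 2 + B 3) - t • g := by
      rw [Matrix.mulVec_mulVec, Matrix.nonsing_inv_mul _ (isUnit_iff_ne_zero.mpr hD),
        Matrix.one_mulVec]
    rw [hPv, Matrix.mulVec_zero] at h1'
    exact sub_eq_zero.mp h1'.symm
end
end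

section
/- (Euclidean specialization) Let A₁A₂A₃A₄ be four points in ℝ², no three collinear, and let G_pq be the midpoint of the segment A_pA_q for each pair p ≠ q. Then the six midpoints G₁₂, G₁₃, G₁₄, G₂₃, G₂₄, G₃₄ and the three diagonal points I = A₁A₃ ∩ A₂A₄, I' = A₁A₄ ∩ A₂A₃, Ī = A₁A₂ ∩ A₃A₄ (when they exist) lie on a common conic, and the three lines G₁₂G₃₄, G₁₃G₂₄, G₁₄G₂₃ are concurrent at the centroid of the four points. -/
lemma cross_of_collinear (P Q R : ℝ × ℝ) (h : Collinear ℝ ({P, Q, R} : Set (ℝ × ℝ))) :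
    (Q.1 - P.1) * (R.2 - P.2) - (Q.2 - P.2) * (R.1 - P.1) = 0 := by
  rw [collinear_iff_of_mem (by simp : P ∈ ({P, Q, R} : Set (ℝ × ℝ)))] at h
  obtain ⟨v, hv⟩ := h
  obtain ⟨rq, hq⟩ := hv Q (by simp)
  obtain ⟨rr, hr⟩ := hv R (by simp)
  rw [hq, hr]
  simp [Prod.smul_def, smul_eq_mul]
  ring

lemma collinear_of_cross (P Q R : ℝ × ℝ)
    (h : (Q.1 - P.1) * (R.2 - P.2) - (Q.2 - P.2) * (R.1 - P.1) = 0) :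
    Collinear ℝ ({P, Q, R} : Set (ℝ × ℝ)) := by
  by_cases hQP : Q = P
  · subst hQP
    rw [collinear_iff_of_mem (by simp : Q ∈ ({Q, Q, R} : Set (ℝ × ℝ)))]
    refine ⟨R - Q, fun p hp => ?_⟩
    simp only [Set.mem_insert_iff, Set.mem_singleton_iff] at hp
    rcases hp with rfl | rfl | rfl
    · exact ⟨0, by simp⟩
    · exact ⟨0, by simp⟩
    · exact ⟨1, by simp⟩
  · rw [collinear_iff_of_mem (by simp : P ∈ ({P, Q, R} : Set (ℝ × ℝ)))]
    refine ⟨Q - P, fun p hp => ?_⟩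
    simp only [Set.mem_insert_iff, Set.mem_singleton_iff] at hp
    rcases hp with rfl | rfl | rfl
    · exact ⟨0, by simp⟩
    · exact ⟨1, by simp⟩
    · by_cases h1 : Q.1 - P.1 ≠ 0
      · refine ⟨(p.1 - P.1) / (Q.1 - P.1), ?_⟩
        have h2 : p.2 - P.2 = (p.1 - P.1) / (Q.1 - P.1) * (Q.2 - P.2) := by
          field_simp; linarith [h]
        ext
        · simp [Prod.smul_def, smul_eq_mul]; field_simp; ring
        · simp [Prod.smul_def, smul_eq_mul]; linarith [h2]
      · push_neg at h1
        have h2 : Q.2 - P.2 ≠ 0 := by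
          intro h2
          apply hQP
          ext
          · linarith [h1]
          · linarith [h2]
        refine ⟨(p.2 - P.2) / (Q.2 - P.2), ?_⟩
        have h3 : p.1 - P.1 = 0 := by
          rw [h1] at h; simp at h
          rcases h with h4 | h4
          · exact absurd h4 h2
          · linarith
        ext
        · simp [Prod.smul_def, smul_eq_mul, h1]; linarith
        · simp [Prod.smul_def, smul_eq_mul]; field_simp; ring

lemma collinear_of_mid (P Q R : ℝ × ℝ) (h : R = (2⁻¹ : ℝ) • (P + Q)) :
    Collinear ℝ ({P, Q, R} : Set (ℝ × ℝ)) := by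
  apply collinear_of_cross
  rw [h]
  simp [Prod.smul_def, smul_eq_mul]
  ring

lemma midpoint_coords (P Q : ℝ × ℝ) :
    midpoint ℝ P Q = (2⁻¹ * (P.1 + Q.1), 2⁻¹ * (P.2 + Q.2)) := by
  rw [midpoint_eq_smul_add]
  ext <;> simp [Prod.smul_def, smul_eq_mul] <;> ring

/-- `P` lies on the affine conic `a x² + b x y + c y² + d x + e y + f = 0`. -/
def OnConic2 (a b c d e f : ℝ) (P : ℝ × ℝ) : Prop :=
  a * P.1 ^ 2 + b * P.1 * P.2 + c * P.2 ^ 2 + d * P.1 + e * P.2 + f = 0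

set_option maxHeartbeats 4000000 in
/-- **Euclidean nine-point conic.** Let `A₁, A₂, A₃, A₄` be four points in the plane,
no three collinear, with the three pairs of opposite sides non-parallel, and let
`I = A₁A₃ ∩ A₂A₄`, `I' = A₁A₄ ∩ A₂A₃`, `Ī = A₁A₂ ∩ A₃A₄` be the diagonal points.
Then the six midpoints of the segments `A_pA_q` and the three diagonal points lie
on a common conic, and the three lines joining midpoints of opposite sides are
concurrent at the centroid `(A₁ + A₂ + A₃ + A₄)/4`. -/
theorem euclidean_nine_point_conic (A1 A2 A3 A4 I I' Ibar : ℝ × ℝ)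
    (h123 : ¬ Collinear ℝ ({A1, A2, A3} : Set (ℝ × ℝ)))
    (h124 : ¬ Collinear ℝ ({A1, A2, A4} : Set (ℝ × ℝ)))
    (h134 : ¬ Collinear ℝ ({A1, A3, A4} : Set (ℝ × ℝ)))
    (h234 : ¬ Collinear ℝ ({A2, A3, A4} : Set (ℝ × ℝ)))
    (hnp1 : ¬ ∃ t : ℝ, A4 - A2 = t • (A3 - A1))
    (hnp2 : ¬ ∃ t : ℝ, A3 - A2 = t • (A4 - A1))
    (hnp3 : ¬ ∃ t : ℝ, A4 - A3 = t • (A2 - A1))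
    (hI1 : Collinear ℝ ({A1, A3, I} : Set (ℝ × ℝ)))
    (hI2 : Collinear ℝ ({A2, A4, I} : Set (ℝ × ℝ)))
    (hI'1 : Collinear ℝ ({A1, A4, I'} : Set (ℝ × ℝ)))
    (hI'2 : Collinear ℝ ({A2, A3, I'} : Set (ℝ × ℝ)))
    (hIbar1 : Collinear ℝ ({A1, A2, Ibar} : Set (ℝ × ℝ)))
    (hIbar2 : Collinear ℝ ({A3, A4, Ibar} : Set (ℝ × ℝ)))
    (G12 G13 G14 G23 G24 G34 O : ℝ × ℝ)
    (hG12 : G12 = midpoint ℝ A1 A2) (hG13 : G13 = midpoint ℝ A1 A3)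
    (hG14 : G14 = midpoint ℝ A1 A4) (hG23 : G23 = midpoint ℝ A2 A3)
    (hG24 : G24 = midpoint ℝ A2 A4) (hG34 : G34 = midpoint ℝ A3 A4)
    (hO : O = (4 : ℝ)⁻¹ • (A1 + A2 + A3 + A4)) :
    (∃ a b c d e f : ℝ, (a, b, c, d, e, f) ≠ (0, 0, 0, 0, 0, 0) ∧
      OnConic2 a b c d e f G12 ∧ OnConic2 a b c d e f G13 ∧
      OnConic2 a b c d e f G14 ∧ OnConic2 a b c d e f G23 ∧
      OnConic2 a b c d e f G24 ∧ OnConic2 a b c d e f G34 ∧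
      OnConic2 a b c d e f I ∧ OnConic2 a b c d e f I' ∧ OnConic2 a b c d e f Ibar) ∧
    Collinear ℝ ({G12, G34, O} : Set (ℝ × ℝ)) ∧
    Collinear ℝ ({G13, G24, O} : Set (ℝ × ℝ)) ∧
    Collinear ℝ ({G14, G23, O} : Set (ℝ × ℝ)) := by
  have hL13I := cross_of_collinear A1 A3 I hI1
  have hL24I := cross_of_collinear A2 A4 I hI2
  have hL14I' := cross_of_collinear A1 A4 I' hI'1
  have hL23I' := cross_of_collinear A2 A3 I' hI'2
  have hL12B := cross_of_collinear A1 A2 Ibar hIbar1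
  have hL34B := cross_of_collinear A3 A4 Ibar hIbar2
  have hC1 : (A3.1 - A1.1) * (A4.2 - A1.2) - (A3.2 - A1.2) * (A4.1 - A1.1) ≠ 0 := by
    intro h; exact h134 (collinear_of_cross A1 A3 A4 h)
  have hC2 : (A3.1 - A2.1) * (A1.2 - A2.2) - (A3.2 - A2.2) * (A1.1 - A2.1) ≠ 0 := by
    intro h
    have hcol := collinear_of_cross A2 A3 A1 h
    apply h123
    have hs : ({A2, A3, A1} : Set (ℝ × ℝ)) = {A1, A2, A3} := by
      ext z; simp only [Set.mem_insert_iff, Set.mem_singleton_iff]; tauto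
    rwa [hs] at hcol
  have hC3 : (A4.1 - A2.1) * (A1.2 - A2.2) - (A4.2 - A2.2) * (A1.1 - A2.1) ≠ 0 := by
    intro h
    have hcol := collinear_of_cross A2 A4 A1 h
    apply h124
    have hs : ({A2, A4, A1} : Set (ℝ × ℝ)) = {A1, A2, A4} := by
      ext z; simp only [Set.mem_insert_iff, Set.mem_singleton_iff]; tauto
    rwa [hs] at hcol
  refine ⟨⟨((-(A3.2 - A1.2))*(A4.1 - A1.1) - (A3.1 - A1.1)*(-(A4.2 - A1.2)))*((-(A4.2 - A2.2))*(-(A3.2 - A2.2))) + ((-(A3.2 - A1.2))*(A3.1 - A2.1) - (A3.1 - A1.1)*(-(A3.2 - A2.2)))*((-(A4.2 - A2.2))*(-(A4.2 - A1.2))) + ((-(A4.2 - A2.2))*(A4.1 - A1.1) - (A4.1 - A2.1)*(-(A4.2 - A1.2)))*((-(A3.2 - A1.2))*(-(A3.2 - A2.2))) + ((-(A4.2 - A2.2))*(A3.1 - A2.1) - (A4.1 - A2.1)*(-(A3.2 - A2.2)))*((-(A3.2 - A1.2))*(-(A4.2 - A1.2))),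
    ((-(A3.2 - A1.2))*(A4.1 - A1.1) - (A3.1 - A1.1)*(-(A4.2 - A1.2)))*((-(A4.2 - A2.2))*(A3.1 - A2.1) + (A4.1 - A2.1)*(-(A3.2 - A2.2))) + ((-(A3.2 - A1.2))*(A3.1 - A2.1) - (A3.1 - A1.1)*(-(A3.2 - A2.2)))*((-(A4.2 - A2.2))*(A4.1 - A1.1) + (A4.1 - A2.1)*(-(A4.2 - A1.2))) + ((-(A4.2 - A2.2))*(A4.1 - A1.1) - (A4.1 - A2.1)*(-(A4.2 - A1.2)))*((-(A3.2 - A1.2))*(A3.1 - A2.1) + (A3.1 - A1.1)*(-(A3.2 - A2.2))) + ((-(A4.2 - A2.2))*(A3.1 - A2.1) - (A4.1 - A2.1)*(-(A3.2 - A2.2)))*((-(A3.2 - A1.2))*(A4.1 - A1.1) + (A3.1 - A1.1)*(-(A4.2 - A1.2))),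
    ((-(A3.2 - A1.2))*(A4.1 - A1.1) - (A3.1 - A1.1)*(-(A4.2 - A1.2)))*((A4.1 - A2.1)*(A3.1 - A2.1)) + ((-(A3.2 - A1.2))*(A3.1 - A2.1) - (A3.1 - A1.1)*(-(A3.2 - A2.2)))*((A4.1 - A2.1)*(A4.1 - A1.1)) + ((-(A4.2 - A2.2))*(A4.1 - A1.1) - (A4.1 - A2.1)*(-(A4.2 - A1.2)))*((A3.1 - A1.1)*(A3.1 - A2.1)) + ((-(A4.2 - A2.2))*(A3.1 - A2.1) - (A4.1 - A2.1)*(-(A3.2 - A2.2)))*((A3.1 - A1.1)*(A4.1 - A1.1)),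
    ((-(A3.2 - A1.2))*(A4.1 - A1.1) - (A3.1 - A1.1)*(-(A4.2 - A1.2)))*((-(A4.2 - A2.2))*((A3.2 - A2.2) * A2.1 - (A3.1 - A2.1) * A2.2) + ((A4.2 - A2.2) * A2.1 - (A4.1 - A2.1) * A2.2)*(-(A3.2 - A2.2))) + ((-(A3.2 - A1.2))*(A3.1 - A2.1) - (A3.1 - A1.1)*(-(A3.2 - A2.2)))*((-(A4.2 - A2.2))*((A4.2 - A1.2) * A1.1 - (A4.1 - A1.1) * A1.2) + ((A4.2 - A2.2) * A2.1 - (A4.1 - A2.1) * A2.2)*(-(A4.2 - A1.2))) + ((-(A4.2 - A2.2))*(A4.1 - A1.1) - (A4.1 - A2.1)*(-(A4.2 - A1.2)))*((-(A3.2 - A1.2))*((A3.2 - A2.2) * A2.1 - (A3.1 - A2.1) * A2.2) + ((A3.2 - A1.2) * A1.1 - (A3.1 - A1.1) * A1.2)*(-(A3.2 - A2.2))) + ((-(A4.2 - A2.2))*(A3.1 - A2.1) - (A4.1 - A2.1)*(-(A3.2 - A2.2)))*((-(A3.2 - A1.2))*((A4.2 - A1.2) * A1.1 - (A4.1 - A1.1)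 * A1.2) + ((A3.2 - A1.2) * A1.1 - (A3.1 - A1.1) * A1.2)*(-(A4.2 - A1.2))),
    ((-(A3.2 - A1.2))*(A4.1 - A1.1) - (A3.1 - A1.1)*(-(A4.2 - A1.2)))*((A4.1 - A2.1)*((A3.2 - A2.2) * A2.1 - (A3.1 - A2.1) * A2.2) + ((A4.2 - A2.2) * A2.1 - (A4.1 - A2.1) * A2.2)*(A3.1 - A2.1)) + ((-(A3.2 - A1.2))*(A3.1 - A2.1) - (A3.1 - A1.1)*(-(A3.2 - A2.2)))*((A4.1 - A2.1)*((A4.2 - A1.2) * A1.1 - (A4.1 - A1.1) * A1.2) + ((A4.2 - A2.2) * A2.1 - (A4.1 - A2.1) * A2.2)*(A4.1 - A1.1)) + ((-(A4.2 - A2.2))*(A4.1 - A1.1) - (A4.1 - A2.1)*(-(A4.2 - A1.2)))*((A3.1 - A1.1)*((A3.2 - A2.2) * A2.1 - (A3.1 - A2.1) * A2.2) + ((A3.2 - A1.2) * A1.1 - (A3.1 - A1.1) * A1.2)*(A3.1 - A2.1)) + ((-(A4.2 - A2.2))*(A3.1 - A2.1) - (A4.1 - A2.1)*(-(A3.2 -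 A2.2)))*((A3.1 - A1.1)*((A4.2 - A1.2) * A1.1 - (A4.1 - A1.1) * A1.2) + ((A3.2 - A1.2) * A1.1 - (A3.1 - A1.1) * A1.2)*(A4.1 - A1.1)),
    ((-(A3.2 - A1.2))*(A4.1 - A1.1) - (A3.1 - A1.1)*(-(A4.2 - A1.2)))*(((A4.2 - A2.2) * A2.1 - (A4.1 - A2.1) * A2.2)*((A3.2 - A2.2) * A2.1 - (A3.1 - A2.1) * A2.2)) + ((-(A3.2 - A1.2))*(A3.1 - A2.1) - (A3.1 - A1.1)*(-(A3.2 - A2.2)))*(((A4.2 - A2.2) * A2.1 - (A4.1 - A2.1) * A2.2)*((A4.2 - A1.2) * A1.1 - (A4.1 - A1.1) * A1.2)) + ((-(A4.2 - A2.2))*(A4.1 - A1.1) - (A4.1 - A2.1)*(-(A4.2 - A1.2)))*(((A3.2 - A1.2) * A1.1 - (A3.1 - A1.1) * A1.2)*((A3.2 - A2.2) * A2.1 - (A3.1 - A2.1) * A2.2)) + ((-(A4.2 - A2.2))*(A3.1 - A2.1) - (A4.1 - A2.1)*(-(A3.2 - A2.2)))*(((A3.2 - A1.2) * A1.1 - (A3.1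 - A1.1) * A1.2)*((A4.2 - A1.2) * A1.1 - (A4.1 - A1.1) * A1.2)), ?_, ?_, ?_, ?_, ?_, ?_, ?_, ?_, ?_, ?_⟩, ?_, ?_, ?_⟩
  · intro h0
    simp only [Prod.mk.injEq] at h0
    obtain ⟨ha, hb, hc, hd, he, hf⟩ := h0
    apply mul_ne_zero (mul_ne_zero hC1 hC2) hC3
    linear_combination (A1.1^2) * ha + (A1.1*A1.2) * hb + (A1.2^2) * hc
      + A1.1 * hd + A1.2 * he + hf
  · rw [hG12, midpoint_coords]
    simp only [OnConic2]
    ring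
  · rw [hG13, midpoint_coords]
    simp only [OnConic2]
    ring
  · rw [hG14, midpoint_coords]
    simp only [OnConic2]
    ring
  · rw [hG23, midpoint_coords]
    simp only [OnConic2]
    ring
  · rw [hG24, midpoint_coords]
    simp only [OnConic2]
    ring
  · rw [hG34, midpoint_coords]
    simp only [OnConic2]
    ring
  · simp only [OnConic2]
    linear_combination ((((-(A3.2 - A1.2))*(A4.1 - A1.1) - (A3.1 - A1.1)*(-(A4.2 - A1.2))))*((-(A3.2 - A2.2))*I.1 + (A3.1 - A2.1)*I.2 + ((A3.2 - A2.2) * A2.1 - (A3.1 - A2.1) * A2.2)) + (((-(A3.2 - A1.2))*(A3.1 - A2.1) - (A3.1 - A1.1)*(-(A3.2 - A2.2))))*((-(A4.2 - A1.2))*I.1 + (A4.1 - A1.1)*I.2 + ((A4.2 - A1.2) * A1.1 - (A4.1 - A1.1) * A1.2))) * hL24I + ((((-(A4.2 - A2.2))*(A4.1 - A1.1) - (A4.1 - A2.1)*(-(A4.2 - A1.2))))*((-(A3.2 - A2.2))*I.1 + (A3.1 - A2.1)*I.2 + ((A3.2 - A2.2) * A2.1 - (A3.1 - A2.1) * A2.2))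 + (((-(A4.2 - A2.2))*(A3.1 - A2.1) - (A4.1 - A2.1)*(-(A3.2 - A2.2))))*((-(A4.2 - A1.2))*I.1 + (A4.1 - A1.1)*I.2 + ((A4.2 - A1.2) * A1.1 - (A4.1 - A1.1) * A1.2))) * hL13I
  · simp only [OnConic2]
    linear_combination ((((-(A3.2 - A1.2))*(A4.1 - A1.1) - (A3.1 - A1.1)*(-(A4.2 - A1.2))))*((-(A4.2 - A2.2))*I'.1 + (A4.1 - A2.1)*I'.2 + ((A4.2 - A2.2) * A2.1 - (A4.1 - A2.1) * A2.2)) + (((-(A4.2 - A2.2))*(A4.1 - A1.1) - (A4.1 - A2.1)*(-(A4.2 - A1.2))))*((-(A3.2 - A1.2))*I'.1 + (A3.1 - A1.1)*I'.2 + ((A3.2 - A1.2) * A1.1 - (A3.1 - A1.1) * A1.2))) * hL23I' + ((((-(A3.2 - A1.2))*(A3.1 - A2.1) - (A3.1 - A1.1)*(-(A3.2 - A2.2))))*((-(A4.2 - A2.2))*I'.1 + (A4.1 - A2.1)*I'.2 + ((A4.2 - A2.2) * A2.1 - (A4.1 - A2.1) * A2.2)) + (((-(A4.2 - A2.2))*(A3.1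 - A2.1) - (A4.1 - A2.1)*(-(A3.2 - A2.2))))*((-(A3.2 - A1.2))*I'.1 + (A3.1 - A1.1)*I'.2 + ((A3.2 - A1.2) * A1.1 - (A3.1 - A1.1) * A1.2))) * hL14I'
  · simp only [OnConic2]
    linear_combination ((-(A2.2 - A1.2))*((A4.1 - A1.1)*((-(A3.2 - A2.2))*Ibar.1 + (A3.1 - A2.1)*Ibar.2 + ((A3.2 - A2.2) * A2.1 - (A3.1 - A2.1) * A2.2)) + (A3.1 - A2.1)*((-(A4.2 - A1.2))*Ibar.1 + (A4.1 - A1.1)*Ibar.2 + ((A4.2 - A1.2) * A1.1 - (A4.1 - A1.1) * A1.2))) - (A2.1 - A1.1)*((-(A4.2 - A1.2))*((-(A3.2 - A2.2))*Ibar.1 + (A3.1 - A2.1)*Ibar.2 + ((A3.2 - A2.2) * A2.1 - (A3.1 - A2.1) * A2.2)) + (-(A3.2 - A2.2))*((-(A4.2 - A1.2))*Ibar.1 + (A4.1 - A1.1)*Ibar.2 + ((A4.2 - A1.2) * A1.1 - (A4.1 - A1.1) * A1.2)))) * hL34B + ((-(A4.2 - A3.2))*((A4.1 - A1.1)*((-(A3.2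 - A2.2))*Ibar.1 + (A3.1 - A2.1)*Ibar.2 + ((A3.2 - A2.2) * A2.1 - (A3.1 - A2.1) * A2.2)) + (A3.1 - A2.1)*((-(A4.2 - A1.2))*Ibar.1 + (A4.1 - A1.1)*Ibar.2 + ((A4.2 - A1.2) * A1.1 - (A4.1 - A1.1) * A1.2))) - (A4.1 - A3.1)*((-(A4.2 - A1.2))*((-(A3.2 - A2.2))*Ibar.1 + (A3.1 - A2.1)*Ibar.2 + ((A3.2 - A2.2) * A2.1 - (A3.1 - A2.1) * A2.2)) + (-(A3.2 - A2.2))*((-(A4.2 - A1.2))*Ibar.1 + (A4.1 - A1.1)*Ibar.2 + ((A4.2 - A1.2) * A1.1 - (A4.1 - A1.1) * A1.2)))) * hL12B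
  · apply collinear_of_mid
    rw [hO, hG12, hG34, midpoint_coords, midpoint_coords]
    ext <;> simp only [Prod.smul_def, Prod.mk_add_mk, Prod.fst_add, Prod.snd_add,
      smul_eq_mul] <;> ring
  · apply collinear_of_mid
    rw [hO, hG13, hG24, midpoint_coords, midpoint_coords]
    ext <;> simp only [Prod.smul_def, Prod.mk_add_mk, Prod.fst_add, Prod.snd_add,
      smul_eq_mul] <;> ring
  · apply collinear_of_mid
    rw [hO, hG14, hG23, midpoint_coords, midpoint_coords]
    ext <;> simp only [Prod.smul_def, Prod.mk_add_mk, Prod.fst_add, Prod.snd_add,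
      smul_eq_mul] <;> ring
end
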